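/- arXiv:1007.3021 — 5 statements merged into one kernel-verified Lean document; each statement's English description precedes it below -/
import Mathlib

section
/- Both Dup and its complement {0,1}* ∖ Dup belong to REG/Rn, while {0,1}* ∖ Dup does not belong to 1C=LIN/lin. Consequently, REG/Rn ⊄ 1C=LIN/lin and REG/Rn ⊄ co-1C=LIN/lin (where co-1C=LIN/lin consists of the complements of languages in 1C=LIN/lin). -/
open scoped BigOperators

/-- A rational one-way probabilistic finite automaton over alphabet `Λ`
(with endmarker matrices `matC` for ¢ and `matD` for $). -/
structure PFA (Λ : Type) where
  Q : Type
  fin : Fintype Q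
  dec : DecidableEq Q
  start : Q
  final : Finset Q
  matC : Matrix Q Q ℚ
  matD : Matrix Q Q ℚ
  mat : Λ → Matrix Q Q ℚ
  nonnegC : ∀ i j, 0 ≤ matC i j
  nonnegD : ∀ i j, 0 ≤ matD i j
  nonnegMat : ∀ σ i j, 0 ≤ mat σ i j
  rowC : ∀ i, ∑ j ∈ fin.elems, matC i j = 1
  rowD : ∀ i, ∑ j ∈ fin.elems, matD i j = 1
  rowMat : ∀ σ i, ∑ j ∈ fin.elems, mat σ i j = 1

/-- Acceptance probability of a 1pfa on an input string. -/
def PFA.accProb {Λ : Type} (M : PFA Λ) (x : List Λ) : ℚ :=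
  letI := M.fin
  letI := M.dec
  ∑ q ∈ M.final,
    (Matrix.vecMul
      (x.foldl (fun v σ => Matrix.vecMul v (M.mat σ))
        (Matrix.vecMul (Pi.single M.start 1) M.matC))
      M.matD) q

/-- `D` is a probability distribution on `Γ^n`. -/
def IsDist {Γ : Type} [Fintype Γ] {n : ℕ} (D : List.Vector Γ n → ℝ) : Prop :=
  (∀ y, 0 ≤ D y) ∧ ∑ y, D y = 1

open Classical in
/-- Probability, under randomized advice `D`, that the track string `[x//y]` lies in `L`. -/
noncomputable def randAccProb {Alp Γ : Type} [Fintype Γ] (L : Set (List (Alp × Γ)))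
    {n : ℕ} (D : List.Vector Γ n → ℝ) (x : List Alp) : ℝ :=
  ∑ y : List.Vector Γ n, if x.zip y.toList ∈ L then D y else 0

/-- `S ∈ REG/n`. -/
def InREGn {Alp : Type} (S : Set (List Alp)) : Prop :=
  ∃ (Γ : Type) (_ : Fintype Γ) (h : ℕ → List Γ), (∀ n, (h n).length = n) ∧
    ∃ (Q : Type) (_ : Fintype Q) (M : DFA (Alp × Γ) Q),
      ∀ x : List Alp, x ∈ S ↔ x.zip (h x.length) ∈ M.accepts

/-- `S ∈ REG/Rn` (bounded error, randomized advice). -/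
def InREGRn {Alp : Type} (S : Set (List Alp)) : Prop :=
  ∃ (Γ : Type) (iΓ : Fintype Γ),
    letI := iΓ
    ∃ (Q : Type) (_ : Fintype Q) (M : DFA (Alp × Γ) Q) (ε : ℝ),
      0 ≤ ε ∧ ε < 1 / 2 ∧
        ∃ D : (n : ℕ) → List.Vector Γ n → ℝ, (∀ n, IsDist (D n)) ∧
          ∀ (n : ℕ) (x : List Alp), x.length = n →
            (x ∈ S → 1 - ε ≤ randAccProb M.accepts (D n) x) ∧
            (x ∉ S → randAccProb M.accepts (D n) x ≤ ε)

/-- `S ∈ CFL/n`. -/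
def InCFLn {Alp : Type} (S : Set (List Alp)) : Prop :=
  ∃ (Γ : Type) (_ : Fintype Γ) (h : ℕ → List Γ), (∀ n, (h n).length = n) ∧
    ∃ L : Language (Alp × Γ), L.IsContextFree ∧
      ∀ x : List Alp, x ∈ S ↔ x.zip (h x.length) ∈ L

/-- `S ∈ CFL/Rn` (bounded error, randomized advice). -/
def InCFLRn {Alp : Type} (S : Set (List Alp)) : Prop :=
  ∃ (Γ : Type) (iΓ : Fintype Γ),
    letI := iΓ
    ∃ (L : Language (Alp × Γ)), L.IsContextFree ∧
      ∃ (ε : ℝ), 0 ≤ ε ∧ ε < 1 / 2 ∧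
        ∃ D : (n : ℕ) → List.Vector Γ n → ℝ, (∀ n, IsDist (D n)) ∧
          ∀ (n : ℕ) (x : List Alp), x.length = n →
            (x ∈ S → 1 - ε ≤ randAccProb L (D n) x) ∧
            (x ∉ S → randAccProb L (D n) x ≤ ε)

/-- `A ∈ 1C=LIN/lin` via the paper's 1pfa characterization. -/
def InOneCeqLin {Alp : Type} (A : Set (List Alp)) : Prop :=
  ∃ (Γ : Type) (_ : Fintype Γ) (h : ℕ → List Γ), (∀ n, (h n).length = n) ∧
    ∃ M : PFA (Alp × Γ),
      ∀ x : List Alp, x ∈ A ↔ M.accProb (x.zip (h x.length)) = 1 / 2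

/-- `A ∈ 1PLIN/lin` via the paper's 1pfa characterization. -/
def InOnePLin {Alp : Type} (A : Set (List Alp)) : Prop :=
  ∃ (Γ : Type) (_ : Fintype Γ) (h : ℕ → List Γ), (∀ n, (h n).length = n) ∧
    ∃ M : PFA (Alp × Γ),
      ∀ x : List Alp, x ∈ A ↔ 1 / 2 < M.accProb (x.zip (h x.length))

open Classical in
/-- `(A, μ) ∈ aver-REG/n`. -/
def InAverREGn {Alp : Type} [Fintype Alp] (A : Set (List Alp))
    (μ : (n : ℕ) → List.Vector Alp n → ℝ) : Prop :=
  ∃ (Γ : Type) (_ : Fintype Γ) (h : ℕ → List Γ), (∀ n, (h n).length = n) ∧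
    ∃ (Q : Type) (_ : Fintype Q) (M : DFA (Alp × Γ) Q) (ε : ℝ),
      0 ≤ ε ∧ ε < 1 / 2 ∧
        ∀ n : ℕ, 1 - ε ≤ ∑ x : List.Vector Alp n,
          if (x.toList.zip (h n) ∈ M.accepts ↔ x.toList ∈ A) then μ n x else 0

/-- The language `Dup = {ww : w ∈ {0,1}*}`. -/
def Dup : Set (List Bool) := {z | ∃ w : List Bool, z = w ++ w}

/-- The marked palindrome language `Pal_# = {w#w^R}` over the alphabet
`Option Bool` (with `none` playing the role of the marker `#`). -/
def PalHash : Set (List (Option Bool)) :=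
  {z | ∃ w : List Bool, z = w.map some ++ none :: (w.reverse.map some)}

/-- Inner product (number of common `true` positions) of two bit strings. -/
def innerProd (u v : List Bool) : ℕ :=
  ((u.zip v).filter fun p => p.1 && p.2).length

/-- The language `IP_* = {axy : a ∈ {λ,0,1}, |x| = |y|, x^R ⊙ y ≡ 0 (mod 2)}`. -/
def IPstar : Language Bool :=
  {z | ∃ a x y : List Bool, (a = [] ∨ a = [false] ∨ a = [true]) ∧
    z = a ++ x ++ y ∧ x.length = y.length ∧ innerProd x.reverse y % 2 = 0}

/-- A negligible function. -/
def Negligible (f : ℕ → ℝ) : Prop :=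
  ∀ k : ℕ, 0 < k → ∃ N : ℕ, ∀ n ≥ N, f n ≤ 1 / (n : ℝ) ^ k

/-- `L` is `REG/n`-pseudorandom. -/
def RegPseudorandom {Alp : Type} [Fintype Alp] (L : Set (List Alp)) : Prop :=
  ∀ B : Set (List Alp), InREGn B →
    Negligible fun n =>
      |(((symmDiff B L) ∩ {x | x.length = n}).ncard : ℝ) /
        (Fintype.card Alp : ℝ) ^ n - 1 / 2|


/-! Part A: the DFA over alphabet Bool × Option (Bool × Bool). -/

abbrev Gam := Option (Bool × Bool)
abbrev Qst := Option (Bool × Bool)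

def stepD : Qst → Bool × Gam → Qst
  | none, _ => none
  | some _, (_, none) => none
  | some p, (a, some b) => some (xor p.1 (a && b.1), xor p.2 (a && b.2))

def dupDFA : DFA (Bool × Gam) Qst :=
  ⟨stepD, some (false, false), {some (false, false)}⟩

def codupDFA : DFA (Bool × Gam) Qst :=
  ⟨stepD, some (false, false), {some (false, false)}ᶜ⟩

def ipf (l : List (Bool × (Bool × Bool))) : Bool :=
  l.foldr (fun q s => xor (q.1 && q.2.1) s) false

def ips (l : List (Bool × (Bool × Bool))) : Bool :=
  l.foldr (fun q s => xor (q.1 && q.2.2) s) false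

lemma foldl_stepD (l : List (Bool × (Bool × Bool))) : ∀ p : Bool × Bool,
    (l.map (Prod.map id some)).foldl stepD (some p) =
      some (xor p.1 (ipf l), xor p.2 (ips l)) := by
  induction l with
  | nil => intro p; simp [ipf, ips]
  | cons q l ih =>
      intro p
      rcases q with ⟨a, b1, b2⟩
      simp only [List.map_cons, List.foldl_cons, Prod.map, id, stepD, ipf, ips,
        List.foldr_cons] at *
      rw [ih]
      simp [Bool.xor_assoc, ipf, ips]

lemma foldl_stepD_none (l : List (Bool × Gam)) : l.foldl stepD none = none := by
  induction l with
  | nil => rfl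
  | cons q l ih => simpa [stepD] using ih

lemma ipf_append (l1 l2 : List (Bool × (Bool × Bool))) :
    ipf (l1 ++ l2) = xor (ipf l1) (ipf l2) := by
  induction l1 with
  | nil => simp [ipf]
  | cons q l ih =>
      show xor (q.1 && q.2.1) (ipf (l ++ l2)) = xor (xor (q.1 && q.2.1) (ipf l)) (ipf l2)
      rw [ih, Bool.xor_assoc]

lemma ips_append (l1 l2 : List (Bool × (Bool × Bool))) :
    ips (l1 ++ l2) = xor (ips l1) (ips l2) := by
  induction l1 with
  | nil => simp [ips]
  | cons q l ih =>
      show xor (q.1 && q.2.2) (ips (l ++ l2)) = xor (xor (q.1 && q.2.2) (ips l)) (ips l2)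
      rw [ih, Bool.xor_assoc]
def vconsEquiv (α : Type) (m : ℕ) : α × List.Vector α m ≃ List.Vector α (m+1) where
  toFun p := p.1 ::ᵥ p.2
  invFun v := (v.head, v.tail)
  left_inv p := by simp
  right_inv v := by simp [List.Vector.cons_head_tail]

lemma count_lemma : ∀ (m : ℕ) (u v : List Bool), u.length = m → v.length = m → u ≠ v →
    ∑ z : List.Vector (Bool × Bool) m,
      (if ipf (u.zip z.toList) = ipf (v.zip z.toList) ∧
          ips (u.zip z.toList) = ips (v.zip z.toList) then (1:ℝ) else 0)
      = 4 ^ m / 4 := by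
  intro m
  induction m with
  | zero =>
      intro u v hu hv hne
      exact absurd (by rw [List.length_eq_zero_iff.mp hu, List.length_eq_zero_iff.mp hv]) hne
  | succ m ih =>
      intro u v hu hv hne
      classical
      rcases u with _ | ⟨c, u'⟩; · simp at hu
      rcases v with _ | ⟨d, v'⟩; · simp at hv
      simp only [List.length_cons, Nat.succ.injEq] at hu hv
      rw [← Equiv.sum_comp (vconsEquiv (Bool × Bool) m)]
      have hzip : ∀ (b : Bool × Bool) (z' : List.Vector (Bool × Bool) m),
          ((vconsEquiv (Bool × Bool) m) (b, z')).toList = b :: z'.toList := by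
        intro b z'; simp [vconsEquiv]
      rw [Fintype.sum_prod_type]
      by_cases hcd : c = d
      · subst hcd
        have hne' : u' ≠ v' := fun h => hne (by rw [h])
        have key : ∀ (b : Bool × Bool) (z' : List.Vector (Bool × Bool) m),
            (if ipf ((c::u').zip ((vconsEquiv (Bool × Bool) m) (b, z')).toList)
                 = ipf ((c::v').zip ((vconsEquiv (Bool × Bool) m) (b, z')).toList) ∧
                ips ((c::u').zip ((vconsEquiv (Bool × Bool) m) (b, z')).toList)
                 = ips ((c::v').zip ((vconsEquiv (Bool × Bool) m) (b, z')).toList) then (1:ℝ) else 0)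
            = (if ipf (u'.zip z'.toList) = ipf (v'.zip z'.toList) ∧
                ips (u'.zip z'.toList) = ips (v'.zip z'.toList) then (1:ℝ) else 0) := by
          intro b z'
          rw [hzip]
          have e1 : ipf ((c::u').zip (b :: z'.toList)) = xor (c && b.1) (ipf (u'.zip z'.toList)) := rfl
          have e2 : ipf ((c::v').zip (b :: z'.toList)) = xor (c && b.1) (ipf (v'.zip z'.toList)) := rfl
          have e3 : ips ((c::u').zip (b :: z'.toList)) = xor (c && b.2) (ips (u'.zip z'.toList)) := rfl
          have e4 : ips ((c::v').zip (b :: z'.toList)) = xor (c && b.2) (ips (v'.zip z'.toList)) := rfl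
          rw [e1, e2, e3, e4]
          congr 1
          · apply propext
            constructor
            · rintro ⟨h1, h2⟩
              constructor
              · cases (c && b.1) <;> simpa using h1
              · cases (c && b.2) <;> simpa using h2
            · rintro ⟨h1, h2⟩; rw [h1, h2]; exact ⟨rfl, rfl⟩
        simp only [key]
        rw [ih u' v' hu hv hne']
        simp only [Finset.sum_const, Finset.card_univ]
        rw [Fintype.card_prod, Fintype.card_bool]
        push_cast
        ring
      · -- heads differ
        rw [Finset.sum_comm]
        have key : ∀ z' : List.Vector (Bool × Bool) m,
            (∑ b : Bool × Bool,
              if ipf ((c::u').zip ((vconsEquiv (Bool × Bool) m) (b, z')).toList)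
                 = ipf ((d::v').zip ((vconsEquiv (Bool × Bool) m) (b, z')).toList) ∧
                ips ((c::u').zip ((vconsEquiv (Bool × Bool) m) (b, z')).toList)
                 = ips ((d::v').zip ((vconsEquiv (Bool × Bool) m) (b, z')).toList) then (1:ℝ) else 0)
            = 1 := by
          intro z'
          simp only [hzip]
          have e1 : ∀ b : Bool × Bool, ipf ((c::u').zip (b :: z'.toList)) = xor (c && b.1) (ipf (u'.zip z'.toList)) := fun _ => rfl
          have e2 : ∀ b : Bool × Bool, ipf ((d::v').zip (b :: z'.toList)) = xor (d && b.1) (ipf (v'.zip z'.toList)) := fun _ => rfl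
          have e3 : ∀ b : Bool × Bool, ips ((c::u').zip (b :: z'.toList)) = xor (c && b.2) (ips (u'.zip z'.toList)) := fun _ => rfl
          have e4 : ∀ b : Bool × Bool, ips ((d::v').zip (b :: z'.toList)) = xor (d && b.2) (ips (v'.zip z'.toList)) := fun _ => rfl
          simp only [e1, e2, e3, e4]
          rw [Fintype.sum_prod_type]
          generalize ipf (u'.zip z'.toList) = X1
          generalize ipf (v'.zip z'.toList) = Y1
          generalize ips (u'.zip z'.toList) = X2
          generalize ips (v'.zip z'.toList) = Y2
          rcases Bool.eq_false_or_eq_true c with hc | hc <;>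
            rcases Bool.eq_false_or_eq_true d with hd | hd <;>
              first
                | (exact absurd (hc.trans hd.symm) hcd)
                | (subst hc; subst hd;
                   cases X1 <;> cases Y1 <;> cases X2 <;> cases Y2 <;> simp <;> first | decide | norm_num)
        simp only [key]
        simp only [Finset.sum_const, Finset.card_univ, card_vector, Fintype.card_prod,
          Fintype.card_bool, nsmul_eq_mul]
        push_cast
        ring
/-! Part C: encoding of advice strings and the advice distribution. -/

def Evec {m : ℕ} (z : List.Vector (Bool × Bool) m) : List.Vector Gam (2*m) :=
  ⟨((z.toList ++ z.toList).map some : List Gam), by simp [z.2]; ring⟩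

lemma Evec_toList {m : ℕ} (z : List.Vector (Bool × Bool) m) :
    (Evec z).toList = (z.toList ++ z.toList).map some := rfl

lemma Evec_injective {m : ℕ} : Function.Injective (@Evec m) := by
  intro z z' h
  have h2 : (z.toList ++ z.toList).map some = (z'.toList ++ z'.toList).map some :=
    congrArg List.Vector.toList h
  have h3 : z.toList ++ z.toList = z'.toList ++ z'.toList :=
    List.map_injective_iff.mpr (Option.some_injective _) h2
  have h4 : z.toList = z'.toList := by
    have := congrArg (List.take m) h3
    rwa [List.take_left' z.toList_length, List.take_left' z'.toList_length] at this
  exact List.Vector.toList_injective h4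

def Good {n : ℕ} (y : List.Vector Gam n) : Prop :=
  ∃ z : List (Bool × Bool), y.toList = (z ++ z).map some

lemma good_iff {m : ℕ} (y : List.Vector Gam (2*m)) :
    Good y ↔ ∃ z : List.Vector (Bool × Bool) m, y = Evec z := by
  constructor
  · rintro ⟨z, hz⟩
    have hlen : z.length = m := by
      have := congrArg List.length hz
      simp [y.2] at this
      omega
    exact ⟨⟨z, hlen⟩, List.Vector.toList_injective (by rw [hz]; rfl)⟩
  · rintro ⟨z, rfl⟩
    exact ⟨z.toList, rfl⟩

open Classical in
/-- The advice distribution. -/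
noncomputable def Dn (n : ℕ) : List.Vector Gam n → ℝ := fun y =>
  if n % 2 = 1 then (if y.toList = List.replicate n none then 1 else 0)
  else (if Good y then (1/2 : ℝ)^n else 0)

lemma Dn_nonneg (n : ℕ) (y : List.Vector Gam n) : 0 ≤ Dn n y := by
  unfold Dn; split_ifs <;> norm_num

/-- reindexing sums over advice vectors vanishing off the support -/
lemma sum_Evec {m : ℕ} (f : List.Vector Gam (2*m) → ℝ)
    (h0 : ∀ y, ¬ Good y → f y = 0) :
    ∑ y : List.Vector Gam (2*m), f y = ∑ z : List.Vector (Bool × Bool) m, f (Evec z) := by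
  classical
  rw [← Finset.sum_image (g := Evec) (f := f)
    (fun x _ y _ h => Evec_injective h)]
  apply (Finset.sum_subset (Finset.subset_univ _) _).symm
  intro y _ hy
  apply h0
  rw [good_iff]
  rintro ⟨z, rfl⟩
  exact hy (Finset.mem_image.mpr ⟨z, Finset.mem_univ _, rfl⟩)

lemma card_vec_bb (m : ℕ) : (Fintype.card (List.Vector (Bool × Bool) m) : ℝ) = 4^m := by
  rw [card_vector, Fintype.card_prod, Fintype.card_bool]
  push_cast
  norm_num

lemma pow_half_two_mul (m : ℕ) : (4:ℝ)^m * (1/2:ℝ)^(2*m) = 1 := by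
  rw [pow_mul, ← mul_pow]
  norm_num

lemma sum_Dn_even (m : ℕ) : ∑ y : List.Vector Gam (2*m), Dn (2*m) y = 1 := by
  rw [sum_Evec (Dn (2*m)) (fun y hy => by simp [Dn, Nat.mul_mod_right, hy])]
  have : ∀ z : List.Vector (Bool × Bool) m, Dn (2*m) (Evec z) = (1/2:ℝ)^(2*m) := by
    intro z
    have : Good (Evec z) := ⟨z.toList, rfl⟩
    simp [Dn, Nat.mul_mod_right, this]
  simp only [this, Finset.sum_const, Finset.card_univ, nsmul_eq_mul]
  rw [card_vec_bb, pow_half_two_mul]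

lemma sum_Dn_odd (n : ℕ) (hn : n % 2 = 1) : ∑ y : List.Vector Gam n, Dn n y = 1 := by
  classical
  have hrep : ∀ y : List.Vector Gam n,
      (y.toList = List.replicate n none) ↔ y = List.Vector.replicate n none := by
    intro y
    constructor
    · intro h; exact List.Vector.toList_injective h
    · rintro rfl; rfl
  have hD : ∀ y : List.Vector Gam n,
      Dn n y = if y = List.Vector.replicate n none then 1 else 0 := by
    intro y
    simp [Dn, hn, hrep y]
  simp only [hD]
  rw [Finset.sum_ite_eq' Finset.univ]
  simp
/-! Part D: acceptance characterizations and probability computations. -/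

lemma bool_xor_eq_false (a b : Bool) : (xor a b = false) ↔ a = b := by
  cases a <;> cases b <;> simp

lemma eval_even (u v : List Bool) {m : ℕ} (hu : u.length = m)
    (z : List.Vector (Bool × Bool) m) (x : List Bool) (hx : x = u ++ v) :
    (x.zip (Evec z).toList).foldl stepD (some (false, false)) =
      some (xor (ipf (u.zip z.toList)) (ipf (v.zip z.toList)),
            xor (ips (u.zip z.toList)) (ips (v.zip z.toList))) := by
  subst hx
  have hz : (u ++ v).zip (Evec z).toList =
      ((u.zip z.toList) ++ (v.zip z.toList)).map (Prod.map id some) := by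
    rw [Evec_toList, List.zip_map_right, List.zip_append (by rw [hu, z.toList_length])]
  rw [hz, foldl_stepD, ipf_append, ips_append]
  simp

lemma accepts_dup_even (u v : List Bool) {m : ℕ} (hu : u.length = m)
    (z : List.Vector (Bool × Bool) m) (x : List Bool) (hx : x = u ++ v) :
    (x.zip (Evec z).toList ∈ dupDFA.accepts) ↔
      (ipf (u.zip z.toList) = ipf (v.zip z.toList) ∧
       ips (u.zip z.toList) = ips (v.zip z.toList)) := by
  rw [DFA.mem_accepts]
  show (x.zip (Evec z).toList).foldl stepD (some (false, false)) ∈ ({some (false, false)} : Set Qst) ↔ _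
  rw [eval_even u v hu z x hx, Set.mem_singleton_iff]
  simp only [Option.some_inj, Prod.mk.injEq, bool_xor_eq_false]

lemma accepts_codup_even (u v : List Bool) {m : ℕ} (hu : u.length = m)
    (z : List.Vector (Bool × Bool) m) (x : List Bool) (hx : x = u ++ v) :
    (x.zip (Evec z).toList ∈ codupDFA.accepts) ↔
      ¬ (ipf (u.zip z.toList) = ipf (v.zip z.toList) ∧
       ips (u.zip z.toList) = ips (v.zip z.toList)) := by
  rw [DFA.mem_accepts]
  show (x.zip (Evec z).toList).foldl stepD (some (false, false)) ∈ ({some (false, false)} : Set Qst)ᶜ ↔ _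
  rw [Set.mem_compl_iff, Set.mem_singleton_iff]
  constructor
  · intro h hc
    apply h
    rw [eval_even u v hu z x hx]
    simp [hc.1, hc.2]
  · intro h hc
    apply h
    rw [eval_even u v hu z x hx] at hc
    simp only [Option.some_inj, Prod.mk.injEq, bool_xor_eq_false] at hc
    exact hc

lemma eval_odd (x : List Bool) (n : ℕ) (hx : x.length = n) (hn : n % 2 = 1) :
    (x.zip (List.replicate n (none : Gam))).foldl stepD (some (false, false)) = none := by
  rcases x with _ | ⟨a, x'⟩
  · simp at hx; omega
  · have hn' : ∃ n', n = n' + 1 := ⟨x'.length, by simpa using hx.symm⟩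
    rcases hn' with ⟨n', rfl⟩
    rw [List.replicate_succ]
    simp only [List.zip_cons_cons, List.foldl_cons]
    exact foldl_stepD_none _

open Classical in
/-- randAccProb over the even-length support -/
lemma randAcc_even (L : Set (List (Bool × Gam))) (m : ℕ) (x : List Bool) :
    randAccProb L (Dn (2*m)) x =
      ∑ z : List.Vector (Bool × Bool) m,
        (if x.zip (Evec z).toList ∈ L then (1/2:ℝ)^(2*m) else 0) := by
  classical
  unfold randAccProb
  rw [sum_Evec _ (fun y hy => by
    have : Dn (2*m) y = 0 := by simp [Dn, Nat.mul_mod_right, hy]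
    rw [this]; split_ifs <;> rfl)]
  apply Finset.sum_congr rfl
  intro z _
  have hD : Dn (2*m) (Evec z) = (1/2:ℝ)^(2*m) := by
    have : Good (Evec z) := ⟨z.toList, rfl⟩
    simp [Dn, Nat.mul_mod_right, this]
  rw [hD]

open Classical in
lemma randAcc_odd (L : Set (List (Bool × Gam))) (n : ℕ) (hn : n % 2 = 1) (x : List Bool) :
    randAccProb L (Dn n) x =
      if x.zip (List.replicate n (none : Gam)) ∈ L then 1 else 0 := by
  classical
  unfold randAccProb
  have hrep : ∀ y : List.Vector Gam n,
      (y.toList = List.replicate n none) ↔ y = List.Vector.replicate n none := by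
    intro y
    constructor
    · intro h; exact List.Vector.toList_injective h
    · rintro rfl; rfl
  have key : ∀ y : List.Vector Gam n,
      (if x.zip y.toList ∈ L then Dn n y else 0) =
      (if y = List.Vector.replicate n none then (if x.zip y.toList ∈ L then 1 else 0) else 0) := by
    intro y
    have hD : Dn n y = if y = List.Vector.replicate n none then 1 else 0 := by
      simp [Dn, hn, hrep y]
    rw [hD]
    split_ifs <;> rfl
  simp only [key]
  rw [Finset.sum_ite_eq' Finset.univ]
  simp; rfl

lemma sum_const_half (m : ℕ) :
    ∑ _z : List.Vector (Bool × Bool) m, (1/2:ℝ)^(2*m) = 1 := by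
  simp only [Finset.sum_const, Finset.card_univ, nsmul_eq_mul]
  rw [card_vec_bb, pow_half_two_mul]

lemma sum_cond_quarter (m : ℕ) (u v : List Bool) (hu : u.length = m) (hv : v.length = m)
    (hne : u ≠ v) :
    ∑ z : List.Vector (Bool × Bool) m,
      (if ipf (u.zip z.toList) = ipf (v.zip z.toList) ∧
          ips (u.zip z.toList) = ips (v.zip z.toList) then (1/2:ℝ)^(2*m) else 0) = 1/4 := by
  classical
  have : ∀ z : List.Vector (Bool × Bool) m,
      (if ipf (u.zip z.toList) = ipf (v.zip z.toList) ∧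
          ips (u.zip z.toList) = ips (v.zip z.toList) then (1/2:ℝ)^(2*m) else 0) =
      (1/2:ℝ)^(2*m) * (if ipf (u.zip z.toList) = ipf (v.zip z.toList) ∧
          ips (u.zip z.toList) = ips (v.zip z.toList) then (1:ℝ) else 0) := by
    intro z; split_ifs <;> ring
  simp only [this]
  rw [← Finset.mul_sum, count_lemma m u v hu hv hne]
  field_simp
  rw [pow_mul]
  norm_num
  rw [← mul_pow]; norm_num
/-! Part E: Dup and Dupᶜ are in REG/Rn. -/

lemma dup_even_len {x : List Bool} (h : x ∈ Dup) : x.length % 2 = 0 := by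
  obtain ⟨w, rfl⟩ := h
  simp [List.length_append]
  omega

lemma not_dup_halves {x : List Bool} (hx : x ∉ Dup) {m : ℕ} (hlen : x.length = 2*m) :
    (x.take m).length = m ∧ (x.drop m).length = m ∧ x = x.take m ++ x.drop m ∧
      x.take m ≠ x.drop m := by
  refine ⟨by simp [hlen]; omega, by simp [hlen]; omega, (List.take_append_drop m x).symm, ?_⟩
  intro h
  refine hx ⟨x.take m, ?_⟩
  conv_lhs => rw [← List.take_append_drop m x]
  rw [h]

lemma isDist_Dn (n : ℕ) : IsDist (Dn n) := by
  refine ⟨Dn_nonneg n, ?_⟩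
  rcases Nat.even_or_odd n with ⟨m, hm⟩ | hodd
  · obtain rfl : n = 2*m := by omega
    exact sum_Dn_even m
  · exact sum_Dn_odd n (Nat.odd_iff.mp hodd)

open Classical in
lemma prob_dup_in {n : ℕ} {x : List Bool} (hlen : x.length = n) (hx : x ∈ Dup) :
    randAccProb dupDFA.accepts (Dn n) x = 1 := by
  obtain ⟨w, rfl⟩ := hx
  obtain rfl : n = 2*w.length := by simp [List.length_append] at hlen; omega
  rw [randAcc_even dupDFA.accepts]
  have key : ∀ z : List.Vector (Bool × Bool) w.length,
      (if (w ++ w).zip (Evec z).toList ∈ dupDFA.accepts then (1/2:ℝ)^(2*w.length) else 0)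
        = (1/2:ℝ)^(2*w.length) := by
    intro z
    rw [if_pos ((accepts_dup_even w w rfl z _ rfl).mpr ⟨rfl, rfl⟩)]
  refine (Finset.sum_congr rfl (fun z _ => key z)).trans ?_
  exact sum_const_half w.length

open Classical in
lemma prob_dup_out_even {m : ℕ} {x : List Bool} (hlen : x.length = 2*m) (hx : x ∉ Dup) :
    randAccProb dupDFA.accepts (Dn (2*m)) x = 1/4 := by
  obtain ⟨hu, hv, hxuv, hne⟩ := not_dup_halves hx hlen
  rw [randAcc_even dupDFA.accepts]
  have key : ∀ z : List.Vector (Bool × Bool) m,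
      (if x.zip (Evec z).toList ∈ dupDFA.accepts then (1/2:ℝ)^(2*m) else 0)
        = (if ipf ((x.take m).zip z.toList) = ipf ((x.drop m).zip z.toList) ∧
            ips ((x.take m).zip z.toList) = ips ((x.drop m).zip z.toList)
            then (1/2:ℝ)^(2*m) else 0) := by
    intro z
    have := accepts_dup_even (x.take m) (x.drop m) hu z x hxuv
    split_ifs with h1 h2 h2 <;> first | rfl | (exact absurd (this.mp h1) h2) | (exact absurd (this.mpr h2) h1)
  refine (Finset.sum_congr rfl (fun z _ => key z)).trans ?_
  exact sum_cond_quarter m _ _ hu hv hne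

open Classical in
lemma prob_dup_odd {n : ℕ} {x : List Bool} (hlen : x.length = n) (hn : n % 2 = 1) :
    randAccProb dupDFA.accepts (Dn n) x = 0 := by
  rw [randAcc_odd dupDFA.accepts n hn]
  rw [if_neg]
  show ¬ ((x.zip (List.replicate n (none : Gam))).foldl stepD (some (false, false))
    ∈ ({some (false, false)} : Set Qst))
  rw [eval_odd x n hlen hn]
  simp

open Classical in
lemma prob_codup_odd {n : ℕ} {x : List Bool} (hlen : x.length = n) (hn : n % 2 = 1) :
    randAccProb codupDFA.accepts (Dn n) x = 1 := by
  rw [randAcc_odd codupDFA.accepts n hn]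
  rw [if_pos]
  show ((x.zip (List.replicate n (none : Gam))).foldl stepD (some (false, false))
    ∈ ({some (false, false)} : Set Qst)ᶜ)
  rw [eval_odd x n hlen hn]
  simp

open Classical in
lemma prob_codup_even {m : ℕ} {x : List Bool} (hlen : x.length = 2*m) :
    randAccProb codupDFA.accepts (Dn (2*m)) x
      = 1 - randAccProb dupDFA.accepts (Dn (2*m)) x := by
  rw [randAcc_even codupDFA.accepts, randAcc_even dupDFA.accepts]
  rw [eq_sub_iff_add_eq, ← Finset.sum_add_distrib]
  have key : ∀ z : List.Vector (Bool × Bool) m,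
      ((if x.zip (Evec z).toList ∈ codupDFA.accepts then (1/2:ℝ)^(2*m) else 0) +
       (if x.zip (Evec z).toList ∈ dupDFA.accepts then (1/2:ℝ)^(2*m) else 0))
      = (1/2:ℝ)^(2*m) := by
    intro z
    have hiff : (x.zip (Evec z).toList ∈ codupDFA.accepts) ↔
        ¬ (x.zip (Evec z).toList ∈ dupDFA.accepts) := by
      rw [accepts_codup_even (x.take m) (x.drop m) (by simp [hlen]; omega) z x
          (List.take_append_drop m x).symm,
        accepts_dup_even (x.take m) (x.drop m) (by simp [hlen]; omega) z x
          (List.take_append_drop m x).symm]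
    by_cases h : x.zip (Evec z).toList ∈ dupDFA.accepts
    · rw [if_pos h, if_neg (by rw [hiff]; exact not_not.mpr h)]; ring
    · rw [if_neg h, if_pos (hiff.mpr h)]; ring
  refine (Finset.sum_congr rfl (fun z _ => key z)).trans ?_
  exact sum_const_half m

lemma regrn_dup : InREGRn Dup := by
  classical
  refine ⟨Gam, inferInstance, Qst, inferInstance, dupDFA, 1/4, by norm_num, by norm_num,
    Dn, isDist_Dn, ?_⟩
  intro n x hlen
  constructor
  · intro hx
    rw [prob_dup_in hlen hx]
    norm_num
  · intro hx
    rcases Nat.even_or_odd n with ⟨m, hm⟩ | hodd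
    · obtain rfl : n = 2*m := by omega
      rw [prob_dup_out_even hlen hx]
    · rw [prob_dup_odd hlen (Nat.odd_iff.mp hodd)]
      norm_num

lemma regrn_codup : InREGRn Dupᶜ := by
  classical
  refine ⟨Gam, inferInstance, Qst, inferInstance, codupDFA, 1/4, by norm_num, by norm_num,
    Dn, isDist_Dn, ?_⟩
  intro n x hlen
  constructor
  · intro hx
    have hx' : x ∉ Dup := hx
    rcases Nat.even_or_odd n with ⟨m, hm⟩ | hodd
    · obtain rfl : n = 2*m := by omega
      rw [prob_codup_even hlen, prob_dup_out_even hlen hx']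
    · rw [prob_codup_odd hlen (Nat.odd_iff.mp hodd)]
      norm_num
  · intro hx
    have hx' : x ∈ Dup := not_not.mp hx
    have heven := dup_even_len hx'
    obtain ⟨m, rfl⟩ : ∃ m, n = 2*m := ⟨n/2, by omega⟩
    rw [prob_codup_even hlen, prob_dup_in hlen hx']
    norm_num
/-! Part F: Dupᶜ is not in 1C=LIN/lin (rank argument). -/

lemma foldl_eq_vecMul {Q α : Type} [Fintype Q] [DecidableEq Q] (mat : α → Matrix Q Q ℚ) :
    ∀ (l : List α) (v : Q → ℚ),
      l.foldl (fun v σ => Matrix.vecMul v (mat σ)) v = Matrix.vecMul v ((l.map mat).prod) := by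
  intro l
  induction l with
  | nil => intro v; simp
  | cons a l ih =>
      intro v
      simp only [List.foldl_cons, List.map_cons, List.prod_cons]
      rw [ih, Matrix.vecMul_vecMul]

lemma not_oneceq_codup : ¬ InOneCeqLin Dupᶜ := by
  rintro ⟨Γ, iΓ, h, hlen, M, hM⟩
  letI := M.fin
  letI := M.dec
  classical
  set k := Fintype.card M.Q with hk
  set m := k + 1 with hm
  set y : List Γ := h (2*m) with hy
  have hylen : y.length = 2*m := hlen _
  set wl : (Fin m → Bool) → List Bool := fun w => List.ofFn w with hwl
  have hwlen : ∀ w, (wl w).length = m := fun w => List.length_ofFn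
  have hwinj : Function.Injective wl := fun w u hh => List.ofFn_injective hh
  -- the row and column vectors
  set V : (Fin m → Bool) → M.Q → ℚ := fun w =>
    ((wl w).zip (y.take m)).foldl (fun v σ => Matrix.vecMul v (M.mat σ))
      (Matrix.vecMul (Pi.single M.start 1) M.matC) with hV
  set C : (Fin m → Bool) → M.Q → ℚ := fun u i =>
    ∑ q ∈ M.final, (((((wl u).zip (y.drop m)).map M.mat).prod) * M.matD) i q with hC
  have claim : ∀ w u, M.accProb ((wl w ++ wl u).zip y) = ∑ i, V w i * C u i := by
    intro w u
    have hzip : (wl w ++ wl u).zip y =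
        (wl w).zip (y.take m) ++ (wl u).zip (y.drop m) := by
      conv_lhs => rw [← List.take_append_drop m y]
      exact List.zip_append (by rw [hwlen, List.length_take, hylen]; omega)
    unfold PFA.accProb
    rw [hzip, List.foldl_append]
    rw [foldl_eq_vecMul M.mat ((wl u).zip (y.drop m))]
    rw [Matrix.vecMul_vecMul]
    simp only [Matrix.vecMul, dotProduct]
    rw [Finset.sum_comm]
    apply Finset.sum_congr rfl
    intro i _
    rw [Finset.mul_sum]
  -- the factorization
  set A : Matrix (Fin m → Bool) (Option M.Q) ℚ := fun w o => o.elim 1 (V w) with hA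
  set B : Matrix (Option M.Q) (Fin m → Bool) ℚ := fun o u => o.elim (-(1/2)) (C u) with hB
  set d : (Fin m → Bool) → ℚ := fun w => M.accProb ((wl w ++ wl w).zip y) - 1/2 with hd
  have hlen2 : ∀ w u, (wl w ++ wl u).length = 2*m := by
    intro w u; rw [List.length_append, hwlen, hwlen]; omega
  have hAB : A * B = Matrix.diagonal d := by
    ext w u
    rw [Matrix.mul_apply, Fintype.sum_option]
    by_cases hwu : w = u
    · subst hwu
      rw [Matrix.diagonal_apply_eq]
      simp only [hA, hB, Option.elim, hd]
      rw [← claim w w]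
      ring
    · rw [Matrix.diagonal_apply_ne _ hwu]
      have hnd : (wl w ++ wl u) ∈ Dupᶜ := by
        intro ⟨s, hs⟩
        have hslen : s.length = m := by
          have := congrArg List.length hs
          rw [hlen2, List.length_append] at this
          omega
        have h1 : wl w = s := by
          have := congrArg (List.take m) hs
          rwa [List.take_left' (hwlen w), List.take_left' hslen] at this
        have h2 : wl u = s := by
          have := congrArg (List.drop m) hs
          rwa [List.drop_left' (hwlen w), List.drop_left' hslen] at this
        exact hwu (hwinj (h1.trans h2.symm))
      have hacc : M.accProb ((wl w ++ wl u).zip y) = 1/2 := by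
        have := (hM (wl w ++ wl u)).mp hnd
        rwa [hlen2] at this
      have := claim w u
      simp only [hA, hB, Option.elim]
      rw [← this, hacc]
      ring
  have hdne : ∀ w, d w ≠ 0 := by
    intro w
    have hdup : (wl w ++ wl w) ∈ Dup := ⟨wl w, rfl⟩
    have : M.accProb ((wl w ++ wl w).zip y) ≠ 1/2 := by
      intro hc
      have : (wl w ++ wl w) ∈ Dupᶜ := by
        rw [hM]
        rwa [hlen2]
      exact this hdup
    exact sub_ne_zero.mpr this
  -- rank bounds
  have h1 : (A * B).rank ≤ k + 1 := by
    refine le_trans (Matrix.rank_mul_le_left A B) ?_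
    have := Matrix.rank_le_card_width A
    rwa [Fintype.card_option] at this
  have h2 : (A * B).rank = 2 ^ m := by
    rw [hAB, Matrix.rank_diagonal]
    rw [Fintype.card_congr (Equiv.subtypeUnivEquiv hdne)]
    simp [Fintype.card_fun]
  rw [h2] at h1
  have := Nat.lt_two_pow_self (n := m)
  omega
theorem stmt12 : InREGRn Dup ∧ InREGRn Dupᶜ ∧ ¬ InOneCeqLin Dupᶜ ∧
    (∃ A : Set (List Bool), InREGRn A ∧ ¬ InOneCeqLin A) ∧
    (∃ A : Set (List Bool), InREGRn A ∧ ¬ InOneCeqLin Aᶜ) := by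
  exact ⟨regrn_dup, regrn_codup, not_oneceq_codup,
    ⟨Dupᶜ, regrn_codup, not_oneceq_codup⟩,
    ⟨Dup, regrn_dup, not_oneceq_codup⟩⟩
end

section
/- REG/Rn is properly contained in CFL/Rn: every language in REG/Rn belongs to CFL/Rn, and the language IP_* belongs to CFL/Rn but not to REG/Rn. -/
open scoped BigOperators

section Aux

open ContextFreeGrammar

-- unique split lemma
lemma split_unique {α : Type*} (P : α → Prop) :
    ∀ (a : List α) (a' b b' : List α) (c c' : α), (∀ s ∈ a, P s) → (∀ s ∈ b, P s) →
    ¬ P c → ¬ P c' → a ++ c :: b = a' ++ c' :: b' → a = a' ∧ c = c' ∧ b = b'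
  | [], a', b, b', c, c', ha, hb, hc, hc', heq => by
    cases a' with
    | nil => simpa using heq
    | cons h t =>
      simp only [List.nil_append, List.cons_append, List.cons.injEq] at heq
      exfalso
      exact hc' (hb c' (by rw [heq.2]; exact List.mem_append_right _ (List.mem_cons_self)))
  | h :: t, a', b, b', c, c', ha, hb, hc, hc', heq => by
    cases a' with
    | nil =>
      simp only [List.cons_append, List.nil_append, List.cons.injEq] at heq
      exact absurd (heq.1 ▸ ha h (List.mem_cons_self)) hc'
    | cons h' t' =>
      simp only [List.cons_append, List.cons.injEq] at heq
      obtain ⟨h1, h2, h3⟩ := split_unique P t t' b b' c c' (fun s hs => ha s (List.mem_cons_of_mem _ hs)) hb hc hc' heq.2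
      exact ⟨by rw [heq.1, h1], h2, h3⟩

def IsTerm {T N : Type*} (s : Symbol T N) : Prop := ∃ t, s = Symbol.terminal t

lemma isTerm_map {T N : Type*} (w : List T) : ∀ s ∈ List.map (Symbol.terminal (N := N)) w, IsTerm s := by
  intro s hs; rw [List.mem_map] at hs; obtain ⟨t, _, rfl⟩ := hs; exact ⟨t, rfl⟩

lemma not_isTerm_nt {T N : Type*} (A : N) : ¬ IsTerm (Symbol.nonterminal (T := T) A) := by
  rintro ⟨t, h⟩; cases h

lemma nt_not_mem_map {T N : Type*} (A : N) (w : List T) :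
    Symbol.nonterminal A ∉ List.map Symbol.terminal w := fun h => not_isTerm_nt A (isTerm_map w _ h)

open Classical in
@[reducible]
noncomputable def dfaCFG {α σ : Type} [Fintype α] [Fintype σ] (M : DFA α σ) :
    ContextFreeGrammar α where
  NT := σ
  initial := M.start
  rules := (Finset.univ.image fun p : σ × α =>
      ⟨p.1, [Symbol.terminal p.2, Symbol.nonterminal (M.step p.1 p.2)]⟩) ∪
    ((Finset.univ.filter fun q => q ∈ M.accept).image fun q => ⟨q, []⟩)

lemma dfaCFG_mem_rules {α σ : Type} [Fintype α] [Fintype σ] (M : DFA α σ)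
    {r : ContextFreeRule α σ} :
    r ∈ (dfaCFG M).rules ↔
      (∃ q a, r = ⟨q, [Symbol.terminal a, Symbol.nonterminal (M.step q a)]⟩) ∨
      (∃ q ∈ M.accept, r = ⟨q, []⟩) := by
  classical
  simp only [dfaCFG, Finset.mem_union, Finset.mem_image, Finset.mem_filter, Finset.mem_univ,
    true_and, Prod.exists]
  constructor
  · rintro (⟨q, a, h⟩ | ⟨q, hq, h⟩)
    · exact Or.inl ⟨q, a, h.symm⟩
    · exact Or.inr ⟨q, hq, h.symm⟩
  · rintro (⟨q, a, h⟩ | ⟨q, hq, h⟩)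
    · exact Or.inl ⟨q, a, h.symm⟩
    · exact Or.inr ⟨q, hq, h.symm⟩

lemma dfaCFG_derives {α σ : Type} [Fintype α] [Fintype σ] (M : DFA α σ) :
    ∀ (w : List α) (q : σ), (dfaCFG M).Derives [Symbol.nonterminal q]
      (List.map Symbol.terminal w ++ [Symbol.nonterminal (M.evalFrom q w)])
  | [], q => by simpa [DFA.evalFrom] using Relation.ReflTransGen.refl
  | a :: w, q => by
    have step1 : (dfaCFG M).Produces [Symbol.nonterminal q]
        [Symbol.terminal a, Symbol.nonterminal (M.step q a)] := by
      refine ⟨⟨q, [Symbol.terminal a, Symbol.nonterminal (M.step q a)]⟩, ?_, ?_⟩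
      · exact (dfaCFG_mem_rules M).2 (Or.inl ⟨q, a, rfl⟩)
      · simpa using ContextFreeRule.Rewrites.input_output
    have step2 := ((dfaCFG_derives M w (M.step q a)).append_left [Symbol.terminal a])
    exact (step1.trans_derives (by simpa using step2))

lemma dfaCFG_lang {α σ : Type} [Fintype α] [Fintype σ] (M : DFA α σ) :
    (dfaCFG M).language = M.accepts := by
  ext w
  constructor
  · intro hw
    rw [mem_language_iff] at hw
    -- invariant
    have inv : ∀ s, (dfaCFG M).Derives [Symbol.nonterminal M.start] s →
        (∃ u : List α, s = List.map Symbol.terminal u ++ [Symbol.nonterminal (M.eval u)]) ∨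
        (∃ v : List α, s = List.map Symbol.terminal v ∧ v ∈ M.accepts) := by
      intro s hs
      induction hs with
      | refl => exact Or.inl ⟨[], by simp [DFA.eval, DFA.evalFrom]⟩
      | tail h1 h2 ih =>
        obtain ⟨r, hr, hrw⟩ := h2
        obtain ⟨p, q', hin, hout⟩ := hrw.exists_parts
        rcases ih with ⟨u, rfl⟩ | ⟨v, rfl, hv⟩
        · have hin' : List.map Symbol.terminal u ++ Symbol.nonterminal (M.eval u) :: ([] : List (Symbol α σ)) = p ++ Symbol.nonterminal r.input :: q' := by
            simpa using hin
          obtain ⟨rfl, hcq, hq'⟩ := split_unique IsTerm _ _ _ _ _ _ (isTerm_map u)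
            (fun s hs => absurd hs List.not_mem_nil) (not_isTerm_nt _) (not_isTerm_nt _)
            hin'
          subst hq'
          have hinput : r.input = M.eval u := (Symbol.nonterminal.inj hcq).symm
          rcases (dfaCFG_mem_rules M).1 hr with ⟨q, a, rfl⟩ | ⟨q, hq, rfl⟩
          · simp only at hinput
            subst hinput
            refine Or.inl ⟨u ++ [a], ?_⟩
            rw [hout]
            simp [DFA.eval_append_singleton]
          · simp only at hinput
            refine Or.inr ⟨u, ?_, ?_⟩
            · rw [hout]; simp
            · rw [DFA.mem_accepts, ← hinput]; exact hq
        · exfalso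
          exact nt_not_mem_map r.input v (by rw [hin]; simp)
    rcases inv _ hw with ⟨u, hu⟩ | ⟨v, hv, hacc⟩
    · exfalso
      exact nt_not_mem_map (M.eval u) w (by rw [hu]; simp)
    · rwa [List.map_injective_iff.2 (fun a b h => Symbol.terminal.inj h) hv]
  · intro hw
    rw [mem_language_iff]
    have h1 := dfaCFG_derives M w M.start
    refine h1.trans_produces ?_
    refine ⟨⟨M.eval w, []⟩, (dfaCFG_mem_rules M).2 (Or.inr ⟨M.eval w, hw, rfl⟩), ?_⟩
    have := ContextFreeRule.rewrites_of_exists_parts (⟨M.eval w, []⟩ : ContextFreeRule α σ)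
      (List.map Symbol.terminal w) []
    simpa [DFA.eval] using this



open ContextFreeGrammar

lemma innerProd_nil : innerProd [] [] = 0 := rfl

lemma innerProd_cons (a b : Bool) (u v : List Bool) :
    innerProd (a :: u) (b :: v) = (if a && b then 1 else 0) + innerProd u v := by
  simp only [innerProd, List.zip_cons_cons, List.filter_cons]
  split <;> simp [Nat.add_comm]

lemma innerProd_concat (a b : Bool) (u v : List Bool) (h : u.length = v.length) :
    innerProd (u ++ [a]) (v ++ [b]) = innerProd u v + (if a && b then 1 else 0) := by
  simp only [innerProd, List.zip_append h, List.filter_append, List.length_append]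
  congr 1
  simp only [List.zip_cons_cons, List.zip_nil_right, List.filter_cons, List.filter_nil]
  split <;> simp

inductive NT2 | Z | E | O deriving DecidableEq

def pairRule (A B : NT2) (a b : Bool) : ContextFreeRule (Bool × Fin 3) NT2 :=
  ⟨A, [Symbol.terminal (a, 0), Symbol.nonterminal B, Symbol.terminal (b, 1)]⟩

open Classical in
@[reducible]
noncomputable def ipGrammar : ContextFreeGrammar (Bool × Fin 3) where
  NT := NT2
  initial := NT2.Z
  rules := ([⟨NT2.Z, [Symbol.nonterminal NT2.E]⟩,
    ⟨NT2.Z, [Symbol.terminal (false, 2), Symbol.nonterminal NT2.E]⟩,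
    ⟨NT2.Z, [Symbol.terminal (true, 2), Symbol.nonterminal NT2.E]⟩,
    pairRule NT2.E NT2.E false false, pairRule NT2.E NT2.E false true,
    pairRule NT2.E NT2.E true false, pairRule NT2.E NT2.O true true,
    pairRule NT2.O NT2.O false false, pairRule NT2.O NT2.O false true,
    pairRule NT2.O NT2.O true false, pairRule NT2.O NT2.E true true,
    ⟨NT2.E, []⟩] : List (ContextFreeRule (Bool × Fin 3) NT2)).toFinset

def pick (p : ℕ) : NT2 := if p % 2 = 0 then NT2.E else NT2.O

lemma pick_rules (a b : Bool) (p : ℕ) :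
    pairRule (pick (p + (if a && b then 1 else 0))) (pick p) a b ∈ ipGrammar.rules := by
  classical
  simp only [ipGrammar, List.mem_toFinset, List.mem_cons]
  rcases Nat.even_or_odd p with hp | hp
  · have h0 : pick p = NT2.E := by simp [pick, Nat.even_iff.1 hp]
    cases a <;> cases b <;>
      simp_all [pick, Nat.add_mod, Nat.even_iff.1 hp]
  · have h0 : pick p = NT2.O := by simp [pick, Nat.odd_iff.1 hp]
    cases a <;> cases b <;>
      simp_all [pick, Nat.add_mod, Nat.odd_iff.1 hp]

lemma derive_mid : ∀ (u v : List Bool), u.length = v.length →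
    ipGrammar.Derives [Symbol.nonterminal (pick (innerProd u.reverse v))]
      (List.map Symbol.terminal (u.map (·, (0 : Fin 3)) ++ v.map (·, (1 : Fin 3))))
  | [], v, h => by
    have hv : v = [] := List.length_eq_zero_iff.1 h.symm
    subst hv
    have : pick (innerProd ([] : List Bool).reverse []) = NT2.E := rfl
    rw [this]
    refine Relation.ReflTransGen.single ⟨⟨NT2.E, []⟩, ?_, ?_⟩
    · classical
      simp [ipGrammar, List.mem_toFinset]
    · simpa using ContextFreeRule.Rewrites.input_output (r := (⟨NT2.E, []⟩ : ContextFreeRule (Bool × Fin 3) NT2))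
  | a :: u, v, h => by
    rcases List.eq_nil_or_concat v with rfl | ⟨v', b, rfl⟩
    · simp at h
    · rw [List.concat_eq_append] at h ⊢
      have hlen : u.length = v'.length := by
        simp at h; omega
      have hpar : innerProd (a :: u).reverse (v' ++ [b]) =
          innerProd u.reverse v' + (if a && b then 1 else 0) := by
        rw [List.reverse_cons, innerProd_concat a b u.reverse v' (by simpa using hlen)]
      rw [hpar]
      have step1 : ipGrammar.Produces
          [Symbol.nonterminal (pick (innerProd u.reverse v' + (if a && b then 1 else 0)))]
          [Symbol.terminal (a, (0:Fin 3)), Symbol.nonterminal (pick (innerProd u.reverse v')),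
            Symbol.terminal (b, (1:Fin 3))] := by
        refine ⟨pairRule (pick (innerProd u.reverse v' + (if a && b then 1 else 0))) (pick (innerProd u.reverse v')) a b, pick_rules a b (innerProd u.reverse v'), ?_⟩
        simpa [pairRule] using ContextFreeRule.Rewrites.input_output
          (r := pairRule (pick (innerProd u.reverse v' + (if a && b then 1 else 0)))
            (pick (innerProd u.reverse v')) a b)
      refine step1.trans_derives ?_
      have ih := derive_mid u v' hlen
      have ih2 := (ih.append_left [Symbol.terminal ((a : Bool), (0:Fin 3))]).append_right
        [Symbol.terminal ((b : Bool), (1:Fin 3))]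
      have heq1 : [Symbol.terminal ((a:Bool), (0:Fin 3)), Symbol.nonterminal (pick (innerProd u.reverse v')),
            Symbol.terminal ((b:Bool), (1:Fin 3))] =
          ([Symbol.terminal ((a:Bool), (0:Fin 3))] ++ [Symbol.nonterminal (pick (innerProd u.reverse v'))]) ++
            [Symbol.terminal ((b:Bool), (1:Fin 3))] := by simp
      have heq2 : List.map Symbol.terminal ((a :: u).map (·, (0 : Fin 3)) ++ (v' ++ [b]).map (·, (1 : Fin 3))) =
          ([Symbol.terminal ((a:Bool), (0:Fin 3))] ++
            List.map (Symbol.terminal (N := NT2)) (u.map (·, (0 : Fin 3)) ++ v'.map (·, (1 : Fin 3)))) ++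
            [Symbol.terminal ((b:Bool), (1:Fin 3))] := by simp
      rw [heq1, heq2]
      exact ih2

def PfxOk (pfx : List (Bool × Fin 3)) : Prop := pfx = [] ∨ ∃ b, pfx = [(b, (2:Fin 3))]

def IPcore : Language (Bool × Fin 3) :=
  {w | ∃ (pfx : List (Bool × Fin 3)) (u v : List Bool), PfxOk pfx ∧ u.length = v.length ∧ innerProd u.reverse v % 2 = 0 ∧
    w = pfx ++ u.map (·, (0:Fin 3)) ++ v.map (·, (1:Fin 3))}

lemma pick_ne_Z (p : ℕ) : pick p ≠ NT2.Z := by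
  unfold pick; split <;> simp

lemma singleton_eq_append {α : Type*} {x y : α} {p q : List α} (h : [x] = p ++ y :: q) :
    p = [] ∧ x = y ∧ q = [] := by
  cases p with
  | nil => simp_all
  | cons h' t =>
    simp only [List.cons_append, List.cons.injEq] at h
    exact absurd h.2.symm (by simp)









lemma pick_eq_E {p : ℕ} (h : pick p = NT2.E) : p % 2 = 0 := by
  unfold pick at h
  rcases Nat.mod_two_eq_zero_or_one p with h2 | h2
  · exact h2
  · simp [h2] at h

lemma pick_flip_E {p : ℕ} (h : pick p = NT2.E) : pick (1 + p) = NT2.O := by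
  simp [pick, Nat.add_mod, pick_eq_E h]

lemma pick_eq_O {p : ℕ} (h : pick p = NT2.O) : p % 2 = 1 := by
  unfold pick at h
  rcases Nat.mod_two_eq_zero_or_one p with h2 | h2
  · simp [h2] at h
  · exact h2

lemma pick_flip_O {p : ℕ} (h : pick p = NT2.O) : pick (1 + p) = NT2.E := by
  simp [pick, Nat.add_mod, pick_eq_O h]

def InvIP (s : List (Symbol (Bool × Fin 3) NT2)) : Prop :=
  s = [Symbol.nonterminal NT2.Z] ∨
  (∃ (pfx : List (Bool × Fin 3)) (u v : List Bool), PfxOk pfx ∧ u.length = v.length ∧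
    s = List.map Symbol.terminal (pfx ++ u.map (·, (0:Fin 3))) ++
      [Symbol.nonterminal (pick (innerProd u.reverse v))] ++
      List.map Symbol.terminal (v.map (·, (1:Fin 3)))) ∨
  (∃ w, w ∈ IPcore ∧ s = List.map Symbol.terminal w)

lemma inv_step {s s' : List (Symbol (Bool × Fin 3) NT2)}
    (hp : ipGrammar.Produces s s') (hs : InvIP s) : InvIP s' := by
  classical
  obtain ⟨r, hr, hrw⟩ := hp
  obtain ⟨p, q, hin, rfl⟩ := hrw.exists_parts
  rw [List.append_assoc, List.singleton_append] at hin
  have hrules : r = ⟨NT2.Z, [Symbol.nonterminal NT2.E]⟩ ∨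
      r = ⟨NT2.Z, [Symbol.terminal (false, 2), Symbol.nonterminal NT2.E]⟩ ∨
      r = ⟨NT2.Z, [Symbol.terminal (true, 2), Symbol.nonterminal NT2.E]⟩ ∨
      r = pairRule NT2.E NT2.E false false ∨ r = pairRule NT2.E NT2.E false true ∨
      r = pairRule NT2.E NT2.E true false ∨ r = pairRule NT2.E NT2.O true true ∨
      r = pairRule NT2.O NT2.O false false ∨ r = pairRule NT2.O NT2.O false true ∨
      r = pairRule NT2.O NT2.O true false ∨ r = pairRule NT2.O NT2.E true true ∨
      r = ⟨NT2.E, []⟩ := by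
    simpa [ipGrammar, List.mem_toFinset] using hr
  rcases hs with hsz | ⟨pfx, u, v, hpfx, hlen, hform⟩ | ⟨w, hw, hform⟩
  · -- s = [nt Z]
    rw [hsz] at hin
    obtain ⟨rfl, hZ, rfl⟩ := singleton_eq_append hin
    have hinp : r.input = NT2.Z := (Symbol.nonterminal.inj hZ.symm)
    rcases hrules with rfl | rfl | rfl | rfl | rfl | rfl | rfl | rfl | rfl | rfl | rfl | rfl
    · refine Or.inr (Or.inl ⟨[], [], [], Or.inl rfl, rfl, ?_⟩)
      simp [pick, innerProd]
    · refine Or.inr (Or.inl ⟨[(false, 2)], [], [], Or.inr ⟨false, rfl⟩, rfl, ?_⟩)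
      simp [pick, innerProd]
    · refine Or.inr (Or.inl ⟨[(true, 2)], [], [], Or.inr ⟨true, rfl⟩, rfl, ?_⟩)
      simp [pick, innerProd]
    all_goals exact absurd hinp (by simp [pairRule])
  · -- middle case
    rw [hform, List.append_assoc, List.singleton_append] at hin
    obtain ⟨rfl, hA, rfl⟩ := split_unique IsTerm _ _ _ _ _ _ (isTerm_map _) (isTerm_map _)
      (not_isTerm_nt _) (not_isTerm_nt _) hin
    have hinp : r.input = pick (innerProd u.reverse v) := (Symbol.nonterminal.inj hA.symm)
    rcases hrules with rfl | rfl | rfl | rfl | rfl | rfl | rfl | rfl | rfl | rfl | rfl | rfl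
    · exact absurd hinp.symm (pick_ne_Z _)
    · exact absurd hinp.symm (pick_ne_Z _)
    · exact absurd hinp.symm (pick_ne_Z _)
    · simp only [pairRule] at hinp
      refine Or.inr (Or.inl ⟨pfx, u ++ [false], false :: v, hpfx, by simp [hlen], ?_⟩)
      have hpar : innerProd (u ++ [false]).reverse (false :: v) =
          (if (false : Bool) && false then 1 else 0) + innerProd u.reverse v := by
        rw [List.reverse_append]; simp [innerProd_cons]
      rw [hpar]
      rw [show ((if (false:Bool) && false then 1 else 0) : ℕ) = 0 by simp, Nat.zero_add, ← hinp]
      simp [pairRule]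
    · simp only [pairRule] at hinp
      refine Or.inr (Or.inl ⟨pfx, u ++ [false], true :: v, hpfx, by simp [hlen], ?_⟩)
      have hpar : innerProd (u ++ [false]).reverse (true :: v) =
          (if (false : Bool) && true then 1 else 0) + innerProd u.reverse v := by
        rw [List.reverse_append]; simp [innerProd_cons]
      rw [hpar]
      rw [show ((if (false:Bool) && true then 1 else 0) : ℕ) = 0 by simp, Nat.zero_add, ← hinp]
      simp [pairRule]
    · simp only [pairRule] at hinp
      refine Or.inr (Or.inl ⟨pfx, u ++ [true], false :: v, hpfx, by simp [hlen], ?_⟩)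
      have hpar : innerProd (u ++ [true]).reverse (false :: v) =
          (if (true : Bool) && false then 1 else 0) + innerProd u.reverse v := by
        rw [List.reverse_append]; simp [innerProd_cons]
      rw [hpar]
      rw [show ((if (true:Bool) && false then 1 else 0) : ℕ) = 0 by simp, Nat.zero_add, ← hinp]
      simp [pairRule]
    · simp only [pairRule] at hinp
      refine Or.inr (Or.inl ⟨pfx, u ++ [true], true :: v, hpfx, by simp [hlen], ?_⟩)
      have hpar : innerProd (u ++ [true]).reverse (true :: v) =
          (if (true : Bool) && true then 1 else 0) + innerProd u.reverse v := by
        rw [List.reverse_append]; simp [innerProd_cons]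
      rw [hpar]
      rw [show ((if (true:Bool) && true then 1 else 0) : ℕ) = 1 by simp, pick_flip_E hinp.symm]
      simp [pairRule]
    · simp only [pairRule] at hinp
      refine Or.inr (Or.inl ⟨pfx, u ++ [false], false :: v, hpfx, by simp [hlen], ?_⟩)
      have hpar : innerProd (u ++ [false]).reverse (false :: v) =
          (if (false : Bool) && false then 1 else 0) + innerProd u.reverse v := by
        rw [List.reverse_append]; simp [innerProd_cons]
      rw [hpar]
      rw [show ((if (false:Bool) && false then 1 else 0) : ℕ) = 0 by simp, Nat.zero_add, ← hinp]
      simp [pairRule]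
    · simp only [pairRule] at hinp
      refine Or.inr (Or.inl ⟨pfx, u ++ [false], true :: v, hpfx, by simp [hlen], ?_⟩)
      have hpar : innerProd (u ++ [false]).reverse (true :: v) =
          (if (false : Bool) && true then 1 else 0) + innerProd u.reverse v := by
        rw [List.reverse_append]; simp [innerProd_cons]
      rw [hpar]
      rw [show ((if (false:Bool) && true then 1 else 0) : ℕ) = 0 by simp, Nat.zero_add, ← hinp]
      simp [pairRule]
    · simp only [pairRule] at hinp
      refine Or.inr (Or.inl ⟨pfx, u ++ [true], false :: v, hpfx, by simp [hlen], ?_⟩)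
      have hpar : innerProd (u ++ [true]).reverse (false :: v) =
          (if (true : Bool) && false then 1 else 0) + innerProd u.reverse v := by
        rw [List.reverse_append]; simp [innerProd_cons]
      rw [hpar]
      rw [show ((if (true:Bool) && false then 1 else 0) : ℕ) = 0 by simp, Nat.zero_add, ← hinp]
      simp [pairRule]
    · simp only [pairRule] at hinp
      refine Or.inr (Or.inl ⟨pfx, u ++ [true], true :: v, hpfx, by simp [hlen], ?_⟩)
      have hpar : innerProd (u ++ [true]).reverse (true :: v) =
          (if (true : Bool) && true then 1 else 0) + innerProd u.reverse v := by
        rw [List.reverse_append]; simp [innerProd_cons]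
      rw [hpar]
      rw [show ((if (true:Bool) && true then 1 else 0) : ℕ) = 1 by simp, pick_flip_O hinp.symm]
      simp [pairRule]
    · -- epsilon rule
      simp only at hinp
      refine Or.inr (Or.inr ⟨pfx ++ u.map (·, (0:Fin 3)) ++ v.map (·, (1:Fin 3)),
        ⟨pfx, u, v, hpfx, hlen, pick_eq_E hinp.symm, rfl⟩, ?_⟩)
      simp
  · -- terminal case: no rewrite possible
    exfalso
    have hmem : Symbol.nonterminal r.input ∈ s := by rw [hin]; simp
    rw [hform] at hmem
    exact nt_not_mem_map _ _ hmem

lemma ipGrammar_lang : ipGrammar.language = IPcore := by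
  ext w
  constructor
  · intro hw
    rw [ContextFreeGrammar.mem_language_iff] at hw
    have inv : ∀ s, ipGrammar.Derives [Symbol.nonterminal NT2.Z] s → InvIP s := by
      intro s hs
      induction hs with
      | refl => exact Or.inl rfl
      | tail _ h2 ih => exact inv_step h2 ih
    rcases inv _ hw with h1 | ⟨pfx, u, v, _, _, hform⟩ | ⟨w', hw', hform⟩
    · exfalso
      have : Symbol.nonterminal NT2.Z ∈ List.map (Symbol.terminal (N := NT2)) w := by
        rw [h1]; simp
      exact nt_not_mem_map _ _ this
    · exfalso
      have : Symbol.nonterminal (pick (innerProd u.reverse v)) ∈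
          List.map (Symbol.terminal (N := NT2)) w := by
        rw [hform]; simp
      exact nt_not_mem_map _ _ this
    · rwa [List.map_injective_iff.2 (fun a b h => Symbol.terminal.inj h) hform]
  · intro hw
    obtain ⟨pfx, u, v, hpfx, hlen, hpar, rfl⟩ := hw
    rw [ContextFreeGrammar.mem_language_iff]
    have hmid := derive_mid u v hlen
    have hE : pick (innerProd u.reverse v) = NT2.E := by simp [pick, hpar]
    rw [hE] at hmid
    rcases hpfx with rfl | ⟨b, rfl⟩
    · have step1 : ipGrammar.Produces [Symbol.nonterminal NT2.Z] [Symbol.nonterminal NT2.E] := by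
        refine ⟨⟨NT2.Z, [Symbol.nonterminal NT2.E]⟩, ?_, ?_⟩
        · classical
          simp [ipGrammar, List.mem_toFinset]
        · simpa using ContextFreeRule.Rewrites.input_output
            (r := (⟨NT2.Z, [Symbol.nonterminal NT2.E]⟩ : ContextFreeRule (Bool × Fin 3) NT2))
      refine step1.trans_derives ?_
      simpa using hmid
    · have step1 : ipGrammar.Produces [Symbol.nonterminal NT2.Z]
          [Symbol.terminal ((b : Bool), (2 : Fin 3)), Symbol.nonterminal NT2.E] := by
        refine ⟨⟨NT2.Z, [Symbol.terminal (b, 2), Symbol.nonterminal NT2.E]⟩, ?_, ?_⟩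
        · classical
          cases b <;> simp [ipGrammar, List.mem_toFinset]
        · simpa using ContextFreeRule.Rewrites.input_output
            (r := (⟨NT2.Z, [Symbol.terminal (b, 2), Symbol.nonterminal NT2.E]⟩ :
              ContextFreeRule (Bool × Fin 3) NT2))
      refine step1.trans_derives ?_
      have := hmid.append_left [Symbol.terminal ((b : Bool), (2 : Fin 3))]
      simpa using this

lemma ipcore_cf : IPcore.IsContextFree := ⟨ipGrammar, ipGrammar_lang⟩


def advL (n : ℕ) : List (Fin 3) :=
  (if n % 2 = 1 then [2] else []) ++ List.replicate (n/2) 0 ++ List.replicate (n/2) 1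

lemma advL_length (n : ℕ) : (advL n).length = n := by
  unfold advL
  rcases Nat.mod_two_eq_zero_or_one n with h | h <;> simp [h] <;> omega

lemma zip_map_replicate {γ : Type*} : ∀ (u : List Bool) (c : γ),
    u.zip (List.replicate u.length c) = u.map (·, c)
  | [], _ => rfl
  | a :: u, c => by
    simp only [List.length_cons, List.replicate_succ, List.zip_cons_cons, List.map_cons]
    rw [zip_map_replicate u c]

lemma zip_adv_mem (x : List Bool) : x.zip (advL x.length) ∈ IPcore ↔ x ∈ IPstar := by
  constructor
  · rintro ⟨pfx, u, v, hpfx, hlen, hpar, heq⟩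
    have hx : x = (x.zip (advL x.length)).map Prod.fst :=
      (List.map_fst_zip (l₁ := x) (by rw [advL_length])).symm
    rw [heq] at hx
    simp only [List.map_append, List.map_map] at hx
    have hcomp : ∀ (c : Fin 3) (l : List Bool), List.map (Prod.fst ∘ fun x : Bool => (x, c)) l = l := by
      intro c l; induction l with
      | nil => rfl
      | cons h t ih => simp [ih]
    rw [hcomp, hcomp] at hx
    rcases hpfx with rfl | ⟨b, rfl⟩
    · refine ⟨[], u, v, Or.inl rfl, ?_, hlen, hpar⟩
      simpa using hx
    · refine ⟨[b], u, v, by cases b <;> simp, ?_, hlen, hpar⟩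
      simpa using hx
  · rintro ⟨a, u, v, ha, rfl, hlen, hpar⟩
    rcases ha with rfl | rfl | rfl
    · have hn : (([] : List Bool) ++ u ++ v).length = 2 * u.length := by
        simp [hlen]; omega
      have hmod : (([] : List Bool) ++ u ++ v).length % 2 = 0 := by omega
      have hdiv : (([] : List Bool) ++ u ++ v).length / 2 = u.length := by omega
      refine ⟨[], u, v, Or.inl rfl, hlen, hpar, ?_⟩
      rw [advL, hmod, hdiv]
      simp only [List.nil_append, if_neg (by omega : ¬(0 = 1))]
      rw [List.zip_append (by simp), zip_map_replicate]
      congr 1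
      rw [hlen, zip_map_replicate]
    all_goals {
      first
      | (have hn : (([false] : List Bool) ++ u ++ v).length = 2 * u.length + 1 := by
          simp [hlen]; omega
         have hmod : (([false] : List Bool) ++ u ++ v).length % 2 = 1 := by omega
         have hdiv : (([false] : List Bool) ++ u ++ v).length / 2 = u.length := by omega
         refine ⟨[(false, 2)], u, v, Or.inr ⟨false, rfl⟩, hlen, hpar, ?_⟩
         rw [advL, hmod, hdiv, if_pos rfl]
         rw [show ([false] : List Bool) ++ u ++ v = [false] ++ (u ++ v) by simp,
           show ([(2 : Fin 3)] ++ List.replicate u.length 0 ++ List.replicate u.length 1 : List (Fin 3)) =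
             [(2 : Fin 3)] ++ (List.replicate u.length 0 ++ List.replicate u.length 1) by simp,
           List.zip_append (by simp), List.zip_append (by simp), zip_map_replicate]
         simp only [List.zip_cons_cons, List.zip_nil_right]
         rw [hlen, zip_map_replicate]
         simp)
      | (have hn : (([true] : List Bool) ++ u ++ v).length = 2 * u.length + 1 := by
          simp [hlen]; omega
         have hmod : (([true] : List Bool) ++ u ++ v).length % 2 = 1 := by omega
         have hdiv : (([true] : List Bool) ++ u ++ v).length / 2 = u.length := by omega
         refine ⟨[(true, 2)], u, v, Or.inr ⟨true, rfl⟩, hlen, hpar, ?_⟩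
         rw [advL, hmod, hdiv, if_pos rfl]
         rw [show ([true] : List Bool) ++ u ++ v = [true] ++ (u ++ v) by simp,
           show ([(2 : Fin 3)] ++ List.replicate u.length 0 ++ List.replicate u.length 1 : List (Fin 3)) =
             [(2 : Fin 3)] ++ (List.replicate u.length 0 ++ List.replicate u.length 1) by simp,
           List.zip_append (by simp), List.zip_append (by simp), zip_map_replicate]
         simp only [List.zip_cons_cons, List.zip_nil_right]
         rw [hlen, zip_map_replicate]
         simp) }



noncomputable def sg (a b : Bool) : ℝ := if a && b then -1 else 1

noncomputable def chi {m : ℕ} (x y : Fin m → Bool) : ℝ := ∏ i, sg (x i) (y i)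

lemma sg_abs (a b : Bool) : |sg a b| = 1 := by
  unfold sg; split <;> simp

lemma sum_chi_mul {m : ℕ} (y y' : Fin m → Bool) :
    ∑ x : Fin m → Bool, chi x y * chi x y' = if y = y' then (2:ℝ)^m else 0 := by
  classical
  have h1 : ∀ x : Fin m → Bool, chi x y * chi x y' =
      ∏ i, (sg (x i) (y i) * sg (x i) (y' i)) := by
    intro x; rw [chi, chi, ← Finset.prod_mul_distrib]
  simp only [h1]
  have h2 : ∑ x : Fin m → Bool, ∏ i, (sg (x i) (y i) * sg (x i) (y' i)) =
      ∏ i, ∑ b : Bool, (sg b (y i) * sg b (y' i)) := by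
    rw [Finset.prod_univ_sum, ← Fintype.piFinset_univ]
  rw [h2]
  have h3 : ∀ i, (∑ b : Bool, sg b (y i) * sg b (y' i)) =
      if y i = y' i then 2 else 0 := by
    intro i
    rw [Fintype.sum_bool]
    cases hy : y i <;> cases hy' : y' i <;> simp [sg] <;> norm_num
  simp only [h3]
  by_cases hyy : y = y'
  · subst hyy
    simp [Finset.prod_const, Finset.card_univ]
  · rw [if_neg hyy]
    obtain ⟨i, hi⟩ := Function.ne_iff.1 hyy
    exact Finset.prod_eq_zero (Finset.mem_univ i) (by simp [hi])

lemma lindsey {m : ℕ} (K : (Fin m → Bool) → (Fin m → Bool) → ℝ)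
    (horth : ∀ y y', ∑ x : Fin m → Bool, K x y * K x y' = if y = y' then (2:ℝ)^m else 0)
    (X : Finset (Fin m → Bool)) (v : (Fin m → Bool) → ℝ)
    (hv : ∀ y, |v y| ≤ 1) :
    (∑ x ∈ X, ∑ y : Fin m → Bool, K x y * v y) ^ 2 ≤ ((2:ℝ)^m) ^ 3 := by
  classical
  set N : ℝ := (2:ℝ)^m with hN
  have hNpos : (0:ℝ) < N := by positivity
  set R : (Fin m → Bool) → ℝ := fun x => ∑ y, K x y * v y with hR
  have hcard : (X.card : ℝ) ≤ N := by
    calc (X.card : ℝ) ≤ (Fintype.card (Fin m → Bool) : ℝ) := by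
          exact_mod_cast Finset.card_le_univ X
      _ = N := by simp [hN]
  have hCS : (∑ x ∈ X, R x) ^ 2 ≤ (X.card : ℝ) * ∑ x ∈ X, R x ^ 2 := by
    have := Finset.sum_mul_sq_le_sq_mul_sq X (fun _ => (1:ℝ)) R
    simpa using this
  have hext : ∑ x ∈ X, R x ^ 2 ≤ ∑ x : Fin m → Bool, R x ^ 2 :=
    Finset.sum_le_univ_sum_of_nonneg (fun x => sq_nonneg _)
  have hRsum : ∑ x : Fin m → Bool, R x ^ 2 = N * ∑ y, v y ^ 2 := by
    have hexp : ∀ x, R x ^ 2 = ∑ y, ∑ y', (K x y * v y) * (K x y' * v y') := by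
      intro x
      rw [sq, hR, Finset.sum_mul_sum]
    simp only [hexp]
    rw [Finset.sum_comm]
    have : ∀ y, ∑ x : Fin m → Bool, ∑ y', (K x y * v y) * (K x y' * v y') =
        N * v y ^ 2 := by
      intro y
      rw [Finset.sum_comm]
      have hterm : ∀ y', ∑ x : Fin m → Bool, (K x y * v y) * (K x y' * v y') =
          (v y * v y') * ∑ x, K x y * K x y' := by
        intro y'
        rw [Finset.mul_sum]
        congr 1; funext x; ring
      simp only [hterm, horth]
      have hite : ∀ y' : Fin m → Bool, v y * v y' * (if y = y' then N else 0) =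
          if y = y' then v y * v y' * N else 0 := by
        intro y'; split <;> simp
      calc ∑ y' : Fin m → Bool, v y * v y' * (if y = y' then N else 0)
          = ∑ y' : Fin m → Bool, if y = y' then v y * v y' * N else 0 := by
            exact Finset.sum_congr rfl fun y' _ => hite y'
        _ = v y * v y * N := by rw [Finset.sum_ite_eq]; simp
        _ = N * v y ^ 2 := by ring
    simp only [this]
    rw [← Finset.mul_sum]
  have hvsum : ∑ y, v y ^ 2 ≤ N := by
    calc ∑ y, v y ^ 2 ≤ ∑ _y : Fin m → Bool, (1:ℝ) := by
          refine Finset.sum_le_sum fun y _ => ?_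
          have h := abs_le.1 (hv y)
          nlinarith [h.1, h.2]
      _ = N := by simp [hN]
  calc (∑ x ∈ X, R x) ^ 2 ≤ (X.card : ℝ) * ∑ x ∈ X, R x ^ 2 := hCS
    _ ≤ N * (N * N) := by
        have h1 : ∑ x ∈ X, R x ^ 2 ≤ N * N := by
          calc ∑ x ∈ X, R x ^ 2 ≤ ∑ x : Fin m → Bool, R x ^ 2 := hext
            _ = N * ∑ y, v y ^ 2 := hRsum
            _ ≤ N * N := by nlinarith
        have h2 : (0:ℝ) ≤ ∑ x ∈ X, R x ^ 2 := Finset.sum_nonneg fun x _ => sq_nonneg _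
        nlinarith
    _ = N ^ 3 := by ring


lemma ipstar_even (u v : List Bool) (h : u.length = v.length) :
    u ++ v ∈ IPstar ↔ innerProd u.reverse v % 2 = 0 := by
  constructor
  · rintro ⟨a, s, t, ha, heq, hlen, hpar⟩
    have halen : a.length = 0 := by
      have := congrArg List.length heq
      simp at this
      rcases ha with rfl | rfl | rfl <;> simp at this ⊢ <;> omega
    have ha0 : a = [] := List.length_eq_zero_iff.1 halen
    subst ha0
    simp only [List.nil_append] at heq
    have hsl : u.length = s.length := by
      have := congrArg List.length heq
      simp at this
      omega
    obtain ⟨rfl, rfl⟩ := List.append_inj heq hsl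
    exact hpar
  · intro hpar
    exact ⟨[], u, v, Or.inl rfl, by simp, h, hpar⟩

lemma reverse_ofFn {m : ℕ} (x : Fin m → Bool) :
    (List.ofFn x).reverse = List.ofFn (fun i => x (Fin.rev i)) := by
  apply List.ext_getElem
  · simp
  · intro i h1 h2
    simp only [List.getElem_reverse, List.getElem_ofFn]
    congr 1
    simp at h1 h2 ⊢
    ext
    simp [Fin.rev]
    omega

lemma zip_ofFn {m : ℕ} {α β : Type*} (x : Fin m → α) (y : Fin m → β) :
    (List.ofFn x).zip (List.ofFn y) = List.ofFn (fun i => (x i, y i)) := by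
  apply List.ext_getElem
  · simp
  · intro i h1 h2
    simp [List.getElem_zip]

lemma length_filter_ofFn {α : Type*} : ∀ (m : ℕ) (f : Fin m → α) (p : α → Bool),
    ((List.ofFn f).filter p).length = ∑ i : Fin m, if p (f i) then 1 else 0
  | 0, f, p => by simp
  | (m+1), f, p => by
    rw [List.ofFn_succ, List.filter_cons, Fin.sum_univ_succ]
    split
    · simp only [List.length_cons, length_filter_ofFn m _ p]
      omega
    · simp only [length_filter_ofFn m _ p]
      omega

lemma innerProd_ofFn {m : ℕ} (u v : Fin m → Bool) :
    innerProd (List.ofFn u) (List.ofFn v) = ∑ i : Fin m, if u i && v i then 1 else 0 := by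
  rw [innerProd, zip_ofFn, length_filter_ofFn]

lemma neg_one_pow_innerProd {m : ℕ} (u v : Fin m → Bool) :
    ((-1 : ℝ)) ^ innerProd (List.ofFn u) (List.ofFn v) = chi u v := by
  rw [innerProd_ofFn, chi]
  rw [← Finset.prod_pow_eq_pow_sum]
  refine Finset.prod_congr rfl fun i _ => ?_
  unfold sg
  split <;> norm_num



def revEquiv (m : ℕ) : (Fin m → Bool) ≃ (Fin m → Bool) where
  toFun x := fun i => x (Fin.rev i)
  invFun x := fun i => x (Fin.rev i)
  left_inv x := by funext i; simp [Fin.rev_rev]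
  right_inv x := by funext i; simp [Fin.rev_rev]

lemma part3_main {Γ Q : Type} [Fintype Γ] [Fintype Q] (M : DFA (Bool × Γ) Q) (ε : ℝ)
    (hε0 : 0 ≤ ε) (hεh : ε < 1/2) (D : (n : ℕ) → List.Vector Γ n → ℝ)
    (hD : ∀ n, IsDist (D n))
    (H : ∀ (n : ℕ) (x : List Bool), x.length = n →
      (x ∈ IPstar → 1 - ε ≤ randAccProb M.accepts (D n) x) ∧
      (x ∉ IPstar → randAccProb M.accepts (D n) x ≤ ε)) : False := by
  classical
  set q : ℕ := Fintype.card Q with hqdef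
  have hq1 : 1 ≤ q := Fintype.card_pos_iff.2 ⟨M.start⟩
  set δ : ℝ := 1 - 2*ε with hδdef
  have hδ : 0 < δ := by rw [hδdef]; linarith
  obtain ⟨m, hm⟩ := pow_unbounded_of_one_lt ((q:ℝ)^2 / δ^2) (by norm_num : (1:ℝ) < 2)
  have hqδ : (q:ℝ)^2 < δ^2 * 2^m := by
    rw [div_lt_iff₀ (by positivity)] at hm
    nlinarith
  set n : ℕ := 2*m with hndef
  set N : ℝ := (2:ℝ)^m with hNdef
  have hNpos : (0:ℝ) < N := by positivity
  -- notation
  have hcardB : (Fintype.card (Fin m → Bool) : ℝ) = N := by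
    simp [hNdef, Fintype.card_fun]
  set toL : (Fin m → Bool) → List Bool := fun x => List.ofFn x with htoL
  have hlen2 : ∀ x y : (Fin m → Bool), (toL x ++ toL y).length = n := by
    intro x y; simp [htoL, hndef]; ring
  set ipn : (Fin m → Bool) → (Fin m → Bool) → ℕ := fun x y => innerProd (toL x).reverse (toL y) with hipn
  set K : (Fin m → Bool) → (Fin m → Bool) → ℝ := fun x y => chi (fun i => x (Fin.rev i)) y with hK
  have hKval : ∀ x y : (Fin m → Bool), ((-1:ℝ))^(ipn x y) = K x y := by
    intro x y
    rw [hipn, hK]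
    simp only
    rw [reverse_ofFn x]
    exact neg_one_pow_innerProd _ _
  have hKorth : ∀ y y' : (Fin m → Bool), ∑ x : (Fin m → Bool), K x y * K x y' = if y = y' then N else 0 := by
    intro y y'
    rw [Fintype.sum_equiv (revEquiv m) (fun x => K x y * K x y') (fun x => chi x y * chi x y')
      (fun x => rfl)]
    exact sum_chi_mul y y'
  -- membership
  have hmem : ∀ x y : (Fin m → Bool), (toL x ++ toL y ∈ IPstar ↔ ipn x y % 2 = 0) := by
    intro x y
    exact ipstar_even _ _ (by simp [htoL])
  -- probability
  set P : (Fin m → Bool) → (Fin m → Bool) → ℝ := fun x y => randAccProb M.accepts (D n) (toL x ++ toL y) with hP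
  have hP1 : ∀ x y : (Fin m → Bool), ipn x y % 2 = 0 → 1 - ε ≤ P x y := by
    intro x y h
    exact (H n _ (hlen2 x y)).1 ((hmem x y).2 h)
  have hP2 : ∀ x y : (Fin m → Bool), ipn x y % 2 = 1 → P x y ≤ ε := by
    intro x y h
    refine (H n _ (hlen2 x y)).2 fun hc => ?_
    rw [hmem x y] at hc; omega
  set g : List.Vector Γ n → (Fin m → Bool) → (Fin m → Bool) → ℝ := fun w x y =>
    if (toL x ++ toL y).zip w.toList ∈ M.accepts then (-1:ℝ) else 1 with hg
  have hgP : ∀ x y : (Fin m → Bool), 1 - 2 * P x y = ∑ w : List.Vector Γ n, D n w * g w x y := by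
    intro x y
    have hPs : P x y = ∑ w : List.Vector Γ n, (if (toL x ++ toL y).zip w.toList ∈ M.accepts
        then D n w else 0) := by
      rw [hP]; rfl
    have hterm : ∀ w : List.Vector Γ n, D n w * g w x y =
        D n w - 2 * (if (toL x ++ toL y).zip w.toList ∈ M.accepts then D n w else 0) := by
      intro w
      rw [hg]; simp only
      split <;> ring
    rw [hPs, Finset.sum_congr rfl fun w _ => hterm w, Finset.sum_sub_distrib, (hD n).2,
      ← Finset.mul_sum]
  -- factorization through states
  set f : List.Vector Γ n → (Fin m → Bool) → Q := fun w x => M.eval ((toL x).zip (w.toList.take m)) with hf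
  set σ : List.Vector Γ n → Q → (Fin m → Bool) → ℝ := fun w k y =>
    if M.evalFrom k ((toL y).zip (w.toList.drop m)) ∈ M.accept then (-1:ℝ) else 1 with hσ
  have hfac : ∀ (w : List.Vector Γ n) (x y : (Fin m → Bool)), g w x y = σ w (f w x) y := by
    intro w x y
    have hwlen : w.toList.length = n := w.2
    have hsplit : (toL x ++ toL y).zip w.toList =
        (toL x).zip (w.toList.take m) ++ (toL y).zip (w.toList.drop m) := by
      conv_lhs => rw [← List.take_append_drop m w.toList]
      rw [List.zip_append]
      rw [List.length_take, hwlen]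
      simp [htoL, hndef]; omega
    rw [hg, hσ, hf]
    simp only
    rw [hsplit, DFA.mem_accepts, DFA.eval, DFA.evalFrom_of_append]
  -- the correlation sum
  set T : ℝ := ∑ x : (Fin m → Bool), ∑ y : (Fin m → Bool), K x y * (1 - 2 * P x y) with hT
  have hTle : T ≤ -(δ * (N * N)) := by
    have hpt : ∀ x y : (Fin m → Bool), K x y * (1 - 2 * P x y) ≤ -δ := by
      intro x y
      rcases Nat.mod_two_eq_zero_or_one (ipn x y) with h | h
      · have hk : K x y = 1 := by
          rw [← hKval x y]; exact Even.neg_one_pow (Nat.even_iff.2 h)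
        rw [hk, one_mul]
        have := hP1 x y h
        rw [hδdef]; linarith
      · have hk : K x y = -1 := by
          rw [← hKval x y]; exact Odd.neg_one_pow (Nat.odd_iff.2 h)
        rw [hk]
        have := hP2 x y h
        rw [hδdef]; nlinarith
    calc T ≤ ∑ x : (Fin m → Bool), ∑ y : (Fin m → Bool), -δ := by
          refine Finset.sum_le_sum fun x _ => Finset.sum_le_sum fun y _ => hpt x y
      _ = (Fintype.card (Fin m → Bool) : ℝ) * ((Fintype.card (Fin m → Bool) : ℝ) * (-δ)) := by
          rw [Finset.sum_const, Finset.sum_const, Finset.card_univ, nsmul_eq_mul, nsmul_eq_mul]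
      _ = -(δ * (N * N)) := by rw [hcardB]; ring
  have hTeq : T = ∑ w : List.Vector Γ n, D n w * (∑ x : (Fin m → Bool), ∑ y : (Fin m → Bool), K x y * g w x y) := by
    rw [hT]
    have h1 : ∀ x y : (Fin m → Bool), K x y * (1 - 2 * P x y) = ∑ w : List.Vector Γ n, D n w * (K x y * g w x y) := by
      intro x y
      rw [hgP x y, Finset.mul_sum]
      exact Finset.sum_congr rfl fun w _ => by ring
    calc ∑ x : (Fin m → Bool), ∑ y : (Fin m → Bool), K x y * (1 - 2 * P x y)
        = ∑ x : (Fin m → Bool), ∑ y : (Fin m → Bool), ∑ w : List.Vector Γ n, D n w * (K x y * g w x y) := by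
          exact Finset.sum_congr rfl fun x _ => Finset.sum_congr rfl fun y _ => h1 x y
      _ = ∑ x : (Fin m → Bool), ∑ w : List.Vector Γ n, ∑ y : (Fin m → Bool), D n w * (K x y * g w x y) := by
          exact Finset.sum_congr rfl fun x _ => Finset.sum_comm
      _ = ∑ w : List.Vector Γ n, ∑ x : (Fin m → Bool), ∑ y : (Fin m → Bool), D n w * (K x y * g w x y) := Finset.sum_comm
      _ = ∑ w : List.Vector Γ n, D n w * (∑ x : (Fin m → Bool), ∑ y : (Fin m → Bool), K x y * g w x y) := by
          refine Finset.sum_congr rfl fun w _ => ?_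
          rw [Finset.mul_sum]
          exact Finset.sum_congr rfl fun x _ => by rw [Finset.mul_sum]
  -- bounding each U w
  have hUbound : ∀ w : List.Vector Γ n, |∑ x : (Fin m → Bool), ∑ y : (Fin m → Bool), K x y * g w x y| ≤ q * (N * Real.sqrt N) := by
    intro w
    have hUfib : ∑ x : (Fin m → Bool), ∑ y : (Fin m → Bool), K x y * g w x y =
        ∑ k : Q, ∑ x ∈ Finset.univ.filter (fun x : (Fin m → Bool) => f w x = k),
          ∑ y : (Fin m → Bool), K x y * σ w k y := by
      rw [← Finset.sum_fiberwise Finset.univ (fun x : (Fin m → Bool) => f w x)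
        (fun x : (Fin m → Bool) => ∑ y : (Fin m → Bool), K x y * g w x y)]
      refine Finset.sum_congr rfl fun k _ => Finset.sum_congr rfl fun x hx => ?_
      rw [Finset.mem_filter] at hx
      refine Finset.sum_congr rfl fun y _ => ?_
      rw [hfac w x y, hx.2]
    rw [hUfib]
    calc |∑ k : Q, ∑ x ∈ Finset.univ.filter (fun x : (Fin m → Bool) => f w x = k),
          ∑ y : (Fin m → Bool), K x y * σ w k y|
        ≤ ∑ k : Q, |∑ x ∈ Finset.univ.filter (fun x : (Fin m → Bool) => f w x = k),
          ∑ y : (Fin m → Bool), K x y * σ w k y| := Finset.abs_sum_le_sum_abs _ _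
      _ ≤ ∑ _k : Q, N * Real.sqrt N := by
          refine Finset.sum_le_sum fun k _ => ?_
          have hv : ∀ y : (Fin m → Bool), |σ w k y| ≤ 1 := by
            intro y; rw [hσ]; simp only; split <;> simp
          have hsq := lindsey K hKorth (Finset.univ.filter (fun x : (Fin m → Bool) => f w x = k))
            (σ w k) hv
          have habs : |∑ x ∈ Finset.univ.filter (fun x : (Fin m → Bool) => f w x = k),
              ∑ y : (Fin m → Bool), K x y * σ w k y| ≤ Real.sqrt (N ^ 3) := by
            rw [← Real.sqrt_sq_eq_abs]
            exact Real.sqrt_le_sqrt hsq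
          refine habs.trans ?_
          rw [show N^3 = N^2 * N by ring, Real.sqrt_mul (by positivity),
            Real.sqrt_sq hNpos.le]
      _ = q * (N * Real.sqrt N) := by
          rw [Finset.sum_const, Finset.card_univ, nsmul_eq_mul, hqdef]
  -- combine
  have hfinal : δ * (N * N) ≤ q * (N * Real.sqrt N) := by
    have h1 : δ * (N * N) ≤ -T := by linarith [hTle]
    have h2 : -T ≤ q * (N * Real.sqrt N) := by
      rw [hTeq, ← Finset.sum_neg_distrib]
      calc ∑ w : List.Vector Γ n, -(D n w * (∑ x : (Fin m → Bool), ∑ y : (Fin m → Bool), K x y * g w x y))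
          ≤ ∑ w : List.Vector Γ n, D n w * (q * (N * Real.sqrt N)) := by
            refine Finset.sum_le_sum fun w _ => ?_
            have hDw := (hD n).1 w
            have := hUbound w
            have h3 : -(∑ x : (Fin m → Bool), ∑ y : (Fin m → Bool), K x y * g w x y) ≤ q * (N * Real.sqrt N) :=
              (neg_le_abs _).trans this
            calc -(D n w * (∑ x : (Fin m → Bool), ∑ y : (Fin m → Bool), K x y * g w x y))
                = D n w * (-(∑ x : (Fin m → Bool), ∑ y : (Fin m → Bool), K x y * g w x y)) := by ring
              _ ≤ D n w * (q * (N * Real.sqrt N)) := by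
                  exact mul_le_mul_of_nonneg_left h3 hDw
        _ = q * (N * Real.sqrt N) := by
            rw [← Finset.sum_mul, (hD n).2, one_mul]
    linarith
  -- contradiction
  have hsq : Real.sqrt N * Real.sqrt N = N := Real.mul_self_sqrt hNpos.le
  have hsqrtpos : 0 < Real.sqrt N := Real.sqrt_pos.2 hNpos
  have hstep : δ * N ≤ q * Real.sqrt N := by
    have := hfinal
    nlinarith
  have hsq2 : (δ * N) * (δ * N) ≤ (q * Real.sqrt N) * (q * Real.sqrt N) :=
    mul_self_le_mul_self (by positivity) hstep
  have : δ^2 * N * N ≤ (q:ℝ)^2 * N := by nlinarith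
  nlinarith

end Aux

theorem stmt15 :
    (∀ (Alp : Type) [Fintype Alp] (S : Set (List Alp)), InREGRn S → InCFLRn S) ∧
    InCFLRn IPstar ∧ ¬ InREGRn IPstar := by
  refine ⟨?_, ?_, ?_⟩
  · -- REG/Rn ⊆ CFL/Rn
    rintro Alp _ S ⟨Γ, iΓ, Q, iQ, M, ε, hε0, hεh, D, hD, H⟩
    letI := iΓ
    exact ⟨Γ, iΓ, M.accepts, ⟨dfaCFG M, dfaCFG_lang M⟩, ε, hε0, hεh, D, hD, H⟩
  · -- IPstar ∈ CFL/Rn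
    classical
    refine ⟨Fin 3, inferInstance, IPcore, ipcore_cf, 0, le_refl 0, by norm_num, ?_⟩
    refine ⟨fun n => fun y => if y = (⟨advL n, advL_length n⟩ : List.Vector (Fin 3) n)
      then 1 else 0, ?_, ?_⟩
    · intro n
      constructor
      · intro y; dsimp only; split <;> norm_num
      · exact (Finset.sum_eq_single (s := (Finset.univ : Finset (List.Vector (Fin 3) n))) (⟨advL n, advL_length n⟩ : List.Vector (Fin 3) n) (fun b _ hb => if_neg hb)
          (fun h => absurd (Finset.mem_univ _) h)).trans (if_pos rfl)
    · intro n x hx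
      have hrand : randAccProb IPcore
          (fun y => if y = (⟨advL n, advL_length n⟩ : List.Vector (Fin 3) n)
            then (1:ℝ) else 0) x =
          if x.zip (advL n) ∈ IPcore then 1 else 0 := by
        unfold randAccProb
        have hpt : ∀ y : List.Vector (Fin 3) n,
            (if x.zip y.toList ∈ IPcore
              then (if y = (⟨advL n, advL_length n⟩ : List.Vector (Fin 3) n)
                then (1:ℝ) else 0) else 0) =
            (if y = (⟨advL n, advL_length n⟩ : List.Vector (Fin 3) n)
              then (if x.zip y.toList ∈ IPcore then (1:ℝ) else 0) else 0) := by
          intro y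
          split_ifs <;> simp_all
        refine (Finset.sum_congr rfl fun y _ => hpt y).trans ?_
        exact (Finset.sum_eq_single (s := (Finset.univ : Finset (List.Vector (Fin 3) n))) (⟨advL n, advL_length n⟩ : List.Vector (Fin 3) n) (fun b _ hb => if_neg hb)
          (fun h => absurd (Finset.mem_univ _) h)).trans (if_pos rfl)
      subst hx
      rw [hrand]
      constructor
      · intro hxS
        rw [if_pos ((zip_adv_mem x).2 hxS)]
        norm_num
      · intro hxS
        rw [if_neg (fun hc => hxS ((zip_adv_mem x).1 hc))]
  · -- IPstar ∉ REG/Rn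
    rintro ⟨Γ, iΓ, Q, iQ, M, ε, hε0, hεh, D, hD, H⟩
    letI := iΓ
    exact part3_main M ε hε0 hεh D hD H
end

section
/- If a language A over a finite alphabet Σ belongs to REG/Rn, then for every probability ensemble μ = {μ_n} over Σ*, the distributional problem (A, μ) belongs to aver-REG/n. -/
open scoped BigOperators

theorem stmt16 (Alp : Type) [Fintype Alp] (A : Set (List Alp))
    (μ : (n : ℕ) → List.Vector Alp n → ℝ) (hμ : ∀ n, IsDist (μ n))
    (hA : InREGRn A) : InAverREGn A μ := by
  classical
  obtain ⟨Γ, iΓ, Q, iQ, M, ε, hε0, hε2, D, hD, hM⟩ := hA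
  have key : ∀ n : ℕ, ∃ y : List.Vector Γ n,
      1 - ε ≤ ∑ x : List.Vector Alp n,
        if (x.toList.zip y.toList ∈ M.accepts ↔ x.toList ∈ A) then μ n x else 0 := by
    intro n
    by_contra hcon
    push_neg at hcon
    have hDn := hD n
    have hμn := hμ n
    set F : List.Vector Γ n → ℝ := fun y => ∑ x : List.Vector Alp n,
        if (x.toList.zip y.toList ∈ M.accepts ↔ x.toList ∈ A) then μ n x else 0 with hF
    -- lower bound on the average
    have hswap : ∑ y : List.Vector Γ n, D n y * F y =
        ∑ x : List.Vector Alp n, μ n x *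
          (∑ y : List.Vector Γ n,
            if (x.toList.zip y.toList ∈ M.accepts ↔ x.toList ∈ A) then D n y else 0) := by
      simp only [hF, Finset.mul_sum, mul_ite, mul_zero]
      rw [Finset.sum_comm]
      congr 1; ext x; congr 1; ext y
      by_cases h : (x.toList.zip y.toList ∈ M.accepts ↔ x.toList ∈ A) <;> simp [h, mul_comm]
    have hlow : 1 - ε ≤ ∑ y : List.Vector Γ n, D n y * F y := by
      rw [hswap]
      have hx : ∀ x : List.Vector Alp n, 1 - ε ≤
          ∑ y : List.Vector Γ n,
            if (x.toList.zip y.toList ∈ M.accepts ↔ x.toList ∈ A) then D n y else 0 := by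
        intro x
        have hlen : x.toList.length = n := x.toList_length
        have hMx := hM n x.toList hlen
        by_cases hxA : x.toList ∈ A
        · have : (∑ y : List.Vector Γ n,
              if (x.toList.zip y.toList ∈ M.accepts ↔ x.toList ∈ A) then D n y else 0) =
              randAccProb M.accepts (D n) x.toList := by
            unfold randAccProb
            congr 1; ext y
            simp [hxA]
            rfl
          rw [this]
          exact hMx.1 hxA
        · have heq : (∑ y : List.Vector Γ n,
              if (x.toList.zip y.toList ∈ M.accepts ↔ x.toList ∈ A) then D n y else 0) =
              (∑ y : List.Vector Γ n, D n y) - randAccProb M.accepts (D n) x.toList := by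
            unfold randAccProb
            rw [← Finset.sum_sub_distrib]
            congr 1; ext y
            by_cases h : x.toList.zip y.toList ∈ M.accepts <;> simp [h, hxA]
            · exact (sub_self (D n y)).symm.trans (congrArg _ (if_pos h).symm)
            · exact (sub_zero (D n y)).symm.trans (congrArg _ (if_neg h).symm)
          rw [heq, hDn.2]
          have := hMx.2 hxA
          linarith
      calc 1 - ε = ∑ x : List.Vector Alp n, μ n x * (1 - ε) := by
            rw [← Finset.sum_mul, hμn.2, one_mul]
        _ ≤ _ := Finset.sum_le_sum fun x _ =>
            mul_le_mul_of_nonneg_left (hx x) (hμn.1 x)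
    -- strict upper bound from hcon
    have hy0 : ∃ y0 : List.Vector Γ n, 0 < D n y0 := by
      by_contra h
      push_neg at h
      have : ∑ y : List.Vector Γ n, D n y ≤ 0 :=
        Finset.sum_nonpos fun y _ => h y
      rw [hDn.2] at this; linarith
    obtain ⟨y0, hy0pos⟩ := hy0
    have hup : ∑ y : List.Vector Γ n, D n y * F y <
        ∑ y : List.Vector Γ n, D n y * (1 - ε) := by
      apply Finset.sum_lt_sum
      · intro i _
        exact mul_le_mul_of_nonneg_left (le_of_lt (hcon i)) (hDn.1 i)
      · exact ⟨y0, Finset.mem_univ y0,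
          mul_lt_mul_of_pos_left (hcon y0) hy0pos⟩
    rw [← Finset.sum_mul, hDn.2, one_mul] at hup
    linarith
  refine ⟨Γ, iΓ, fun n => (Classical.choose (key n)).toList,
    fun n => (Classical.choose (key n)).toList_length, Q, iQ, M, ε, hε0, hε2, ?_⟩
  intro n
  exact Classical.choose_spec (key n)
end

section
/- If a language A over a nonempty finite alphabet Σ is REG/n-pseudorandom, then the distributional problem (A, μ_uni) is not in aver-REG/n, where μ_uni = {μ_uni,n} is the uniform probability ensemble (each μ_uni,n is the uniform distribution on Σ^n). -/
open scoped BigOperators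

theorem stmt17 (Alp : Type) [Fintype Alp] [Nonempty Alp] (A : Set (List Alp))
    (hA : RegPseudorandom A) :
    ¬ InAverREGn A (fun n _ => ((Fintype.card Alp : ℝ) ^ n)⁻¹) := by
  classical
  rintro ⟨Γ, iΓ, h, hlen, Q, iQ, M, ε, hε0, hε, hbound⟩
  set B : Set (List Alp) := {x | x.zip (h x.length) ∈ M.accepts} with hB
  have hBreg : InREGn B := ⟨Γ, iΓ, h, hlen, Q, iQ, M, fun x => Iff.rfl⟩
  have hneg := hA B hBreg
  have hcard : 0 < Fintype.card Alp := Fintype.card_pos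
  have hcR : ∀ n : ℕ, (0:ℝ) < (Fintype.card Alp : ℝ) ^ n := by
    intro n; positivity
  have key : ∀ n : ℕ, (((symmDiff B A) ∩ {x | x.length = n}).ncard : ℝ) /
      (Fintype.card Alp : ℝ) ^ n ≤ ε := by
    intro n
    set p : List.Vector Alp n → Prop :=
      fun x => (x.toList.zip (h n) ∈ M.accepts ↔ x.toList ∈ A) with hp
    set s : Finset (List.Vector Alp n) := Finset.univ.filter p with hs
    have hsum : (1 - ε) ≤ (s.card : ℝ) * ((Fintype.card Alp : ℝ) ^ n)⁻¹ := by
      have := hbound n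
      rwa [Finset.sum_ite, Finset.sum_const, Finset.sum_const_zero, add_zero,
        nsmul_eq_mul] at this
    -- identify the symmetric difference set with the complement of s
    have himg : (symmDiff B A) ∩ {x | x.length = n} =
        List.Vector.toList '' (↑(sᶜ) : Set (List.Vector Alp n)) := by
      ext x
      simp only [Set.mem_inter_iff, Set.mem_setOf_eq, Set.mem_image,
        Finset.coe_compl, Finset.coe_filter, Set.mem_compl_iff,
        Finset.mem_coe, Finset.mem_filter, Finset.mem_univ, true_and]
      constructor
      · rintro ⟨hxs, hxn⟩
        refine ⟨⟨x, hxn⟩, ?_, rfl⟩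
        simp only [hs, hp, Finset.mem_filter, Finset.mem_univ, true_and,
          List.Vector.toList_mk]
        rw [Set.mem_symmDiff] at hxs
        intro hiff
        have hmem : x ∈ B ↔ x ∈ A := by
          rw [hB]; simp only [Set.mem_setOf_eq, hxn]; exact (Finset.mem_filter.mp hiff).2
        rcases hxs with ⟨h1, h2⟩ | ⟨h1, h2⟩
        · exact h2 (hmem.mp h1)
        · exact h2 (hmem.mpr h1)
      · rintro ⟨v, hv, rfl⟩
        have hvn : v.toList.length = n := v.toList_length
        refine ⟨?_, hvn⟩
        rw [Set.mem_symmDiff]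
        simp only [hs, hp, Finset.mem_filter, Finset.mem_univ, true_and] at hv
        have hmem : v.toList ∈ B ↔ (v.toList.zip (h n) ∈ M.accepts) := by
          rw [hB]; simp only [Set.mem_setOf_eq, hvn]
        by_cases hA' : v.toList ∈ A
        · exact Or.inr ⟨hA', fun hvB => hv ⟨fun _ => hA', fun _ => hmem.mp hvB⟩⟩
        · left
          refine ⟨hmem.mpr ?_, hA'⟩
          by_contra hacc
          exact hv ⟨fun hx => absurd hx hacc, fun hx => absurd hx hA'⟩
    have hncard : ((symmDiff B A) ∩ {x | x.length = n}).ncard = (sᶜ).card := by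
      rw [himg, Set.ncard_image_of_injective _ List.Vector.toList_injective,
        Set.ncard_coe_finset]
    have hcompl : ((sᶜ).card : ℝ) = (Fintype.card Alp : ℝ) ^ n - s.card := by
      rw [Finset.card_compl]
      have hle : s.card ≤ Fintype.card (List.Vector Alp n) := Finset.card_le_univ s
      push_cast [Nat.cast_sub hle]
      rw [card_vector]
      push_cast
      ring
    rw [hncard, div_le_iff₀ (hcR n), hcompl]
    have h2 : (1 - ε) * (Fintype.card Alp : ℝ) ^ n ≤ s.card := by
      have := mul_le_mul_of_nonneg_right hsum (le_of_lt (hcR n))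
      rwa [mul_assoc, inv_mul_cancel₀ (ne_of_gt (hcR n)), mul_one] at this
    nlinarith [hcR n]
  -- derive contradiction from negligibility
  obtain ⟨N, hN⟩ := hneg 1 one_pos
  set δ : ℝ := 1/2 - ε with hδ
  have hδpos : 0 < δ := by rw [hδ]; linarith
  obtain ⟨m, hm⟩ := exists_nat_gt (1/δ)
  set n := max (max N 1) m with hn
  have hnN : n ≥ N := le_trans (le_max_left N 1) (le_max_left _ _)
  have hn1 : 1 ≤ n := le_trans (le_max_right N 1) (le_max_left _ _)
  have hnm : m ≤ n := le_max_right _ _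
  have hnpos : (0:ℝ) < n := by exact_mod_cast hn1
  have hmpos : (0:ℝ) < m := by
    have h0 : (0:ℝ) < 1/δ := by positivity
    linarith [hm]
  have hlt : 1 / (n : ℝ) < δ := by
    have h1 : 1 / (n:ℝ) ≤ 1 / (m:ℝ) := by
      apply one_div_le_one_div_of_le hmpos
      exact_mod_cast hnm
    have h2 : 1 / (m:ℝ) < δ := by
      rw [div_lt_iff₀ hmpos]
      calc (1:ℝ) = δ * (1/δ) := by field_simp
      _ < δ * m := by exact mul_lt_mul_of_pos_left hm hδpos
    linarith
  have hfn := hN n hnN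
  have hfrac := key n
  have hfrac0 : (0:ℝ) ≤ (((symmDiff B A) ∩ {x | x.length = n}).ncard : ℝ) /
      (Fintype.card Alp : ℝ) ^ n := by positivity
  have habs : δ ≤ |(((symmDiff B A) ∩ {x | x.length = n}).ncard : ℝ) /
      (Fintype.card Alp : ℝ) ^ n - 1 / 2| := by
    rw [abs_sub_comm, abs_of_nonneg (by linarith)]
    linarith
  rw [pow_one] at hfn
  have : δ ≤ 1 / (n:ℝ) := le_trans habs hfn
  linarith
end

section
/- For any language A over a finite alphabet Σ, the following are equivalent: (1) A is in REG/Rn; (2) there exist a finite advice alphabet Γ, a DFA M over Σ × Γ, and an error bound ε ∈ [0,1/2) such that for every probability ensemble {μ_n} over Σ* there exists an advice function h : ℕ → Γ* with |h(n)| = n satisfying, for every n, Pr_{x∼μ_n}[(M accepts [x//h(n)]) ↔ x ∈ A] ≥ 1 − ε. -/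
open scoped BigOperators

open Classical in
private lemma sum_ite_split {Y : Type} [Fintype Y] (P : Y → Prop) (D : Y → ℝ) :
    (∑ y, if P y then D y else 0) + (∑ y, if ¬ P y then D y else 0) = ∑ y, D y := by
  classical
  rw [← Finset.sum_add_distrib]
  exact Finset.sum_congr rfl fun y _ => by by_cases h : P y <;> simp [h]

private lemma yao_minimax {X Y : Type} [Fintype X] [Fintype Y] [Nonempty Y]
    (C : X → Y → ℝ) (c : ℝ)
    (H : ∀ μ : X → ℝ, (∀ x, 0 ≤ μ x) → (∑ x, μ x) = 1 → ∃ y, c ≤ ∑ x, μ x * C x y) :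
    ∃ ν : Y → ℝ, (∀ y, 0 ≤ ν y) ∧ (∑ y, ν y) = 1 ∧ ∀ x, c ≤ ∑ y, ν y * C x y := by
  classical
  set T : (Y → ℝ) → (X → ℝ) := fun ν x => ∑ y, ν y * C x y with hT
  set K : Set (X → ℝ) := T '' stdSimplex ℝ Y with hK
  set Q : Set (X → ℝ) := {v | ∀ x, c ≤ v x} with hQ
  by_cases hdisj : Disjoint K Q
  · exfalso
    have hTlin : IsLinearMap ℝ T := by
      constructor
      · intro ν ν'
        funext x
        simp only [T, Pi.add_apply, add_mul, Finset.sum_add_distrib]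
      · intro a ν
        funext x
        simp only [T, Pi.smul_apply, smul_eq_mul, Finset.mul_sum, mul_assoc]
    have hKconv : Convex ℝ K := (convex_stdSimplex ℝ Y).is_linear_image hTlin
    have hTcont : Continuous T := by
      apply continuous_pi
      intro x
      exact continuous_finset_sum _ fun y _ => (continuous_apply y).mul continuous_const
    have hKcomp : IsCompact K := (isCompact_stdSimplex ℝ Y).image hTcont
    have hQconv : Convex ℝ Q := by
      intro p hp q hq a b ha hb hab x
      have h1 : a * c ≤ a * p x := mul_le_mul_of_nonneg_left (hp x) ha
      have h2 : b * c ≤ b * q x := mul_le_mul_of_nonneg_left (hq x) hb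
      have : (a • p + b • q) x = a * p x + b * q x := rfl
      rw [this]
      have h3 : a * c + b * c = c := by rw [← add_mul, hab, one_mul]
      linarith
    have hQclosed : IsClosed Q := by
      have hQ' : Q = ⋂ x, {v : X → ℝ | c ≤ v x} := by
        ext v; simp [Q, Set.mem_iInter]
      rw [hQ']
      exact isClosed_iInter fun x => isClosed_le continuous_const (continuous_apply x)
    obtain ⟨f, u, v, hfK, huv, hfQ⟩ :=
      geometric_hahn_banach_compact_closed hKconv hKcomp hQconv hQclosed hdisj
    set a : X → ℝ := fun x => f (fun j => if x = j then 1 else 0) with ha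
    have hf_eq : ∀ p : X → ℝ, f p = ∑ x, p x * a x := by
      intro p
      conv_lhs => rw [pi_eq_sum_univ p]
      rw [map_sum]
      exact Finset.sum_congr rfl fun x _ => by rw [map_smul]; simp [ha, smul_eq_mul]
    set v0 : X → ℝ := fun _ => c with hv0
    have hv0Q : v0 ∈ Q := fun x => le_refl c
    have hv0f : v < f v0 := hfQ v0 hv0Q
    have hanonneg : ∀ x, 0 ≤ a x := by
      intro x
      by_contra hax
      push_neg at hax
      set t : ℝ := max 0 ((v - f v0) / a x) with ht
      have ht0 : 0 ≤ t := le_max_left _ _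
      have htq : (v0 + t • fun j => if x = j then (1:ℝ) else 0) ∈ Q := by
        intro x'
        have hxx : (v0 + t • fun j => if x = j then (1:ℝ) else 0) x'
            = c + t * (if x = x' then (1:ℝ) else 0) := rfl
        rw [hxx]
        have : 0 ≤ t * (if x = x' then (1:ℝ) else 0) := by positivity
        linarith
      have hfq : f (v0 + t • fun j => if x = j then (1:ℝ) else 0) = f v0 + t * a x := by
        rw [map_add, map_smul]; simp [ha, smul_eq_mul]
      have h1 : (v - f v0) / a x ≤ t := le_max_right _ _
      have h2 : t * a x ≤ (v - f v0) / a x * a x :=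
        mul_le_mul_of_nonpos_right h1 (le_of_lt hax)
      rw [div_mul_cancel₀ _ (ne_of_lt hax)] at h2
      have h3 := hfQ _ htq
      rw [hfq] at h3
      linarith
    have hS : 0 ≤ ∑ x, a x := Finset.sum_nonneg fun x _ => hanonneg x
    have hfv0 : f v0 = c * ∑ x, a x := by
      rw [hf_eq]; rw [Finset.mul_sum]
    have hvec : ∀ y : Y, (fun x => C x y) ∈ K := by
      intro y
      refine ⟨fun y' => if y' = y then 1 else 0, ⟨fun y' => by positivity, by simp⟩, ?_⟩
      funext x
      simp [T, Finset.sum_ite_eq']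
    have hfvec : ∀ y : Y, f (fun x => C x y) < u := fun y => hfK _ (hvec y)
    rcases eq_or_lt_of_le hS with hS0 | hSpos
    · obtain ⟨y0⟩ := (inferInstance : Nonempty Y)
      have hzero : ∀ x, a x = 0 := fun x =>
        (Finset.sum_eq_zero_iff_of_nonneg (fun x _ => hanonneg x)).mp hS0.symm x
          (Finset.mem_univ x)
      have h1 : f (fun x => C x y0) = 0 := by
        rw [hf_eq]; exact Finset.sum_eq_zero fun x _ => by rw [hzero x, mul_zero]
      have h2 : f v0 = 0 := by rw [hfv0, ← hS0, mul_zero]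
      have h3 := hfvec y0
      linarith
    · obtain ⟨y, hy⟩ := H (fun x => a x / (∑ x, a x))
        (fun x => div_nonneg (hanonneg x) (le_of_lt hSpos))
        (by rw [← Finset.sum_div]; exact div_self (ne_of_gt hSpos))
      have hy' : c * (∑ x, a x) ≤ ∑ x, a x * C x y := by
        have heq : (∑ x, a x / (∑ x, a x) * C x y) * (∑ x, a x) = ∑ x, a x * C x y := by
          rw [Finset.sum_mul]
          refine Finset.sum_congr rfl fun x _ => ?_
          field_simp
        calc c * (∑ x, a x) ≤ (∑ x, a x / (∑ x, a x) * C x y) * (∑ x, a x) :=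
              mul_le_mul_of_nonneg_right hy (le_of_lt hSpos)
          _ = _ := heq
      have hfy : f (fun x => C x y) = ∑ x, a x * C x y := by
        rw [hf_eq]
        exact Finset.sum_congr rfl fun x _ => mul_comm _ _
      have h4 := hfvec y
      rw [hfy] at h4
      rw [hfv0] at hv0f
      linarith
  · rw [Set.not_disjoint_iff] at hdisj
    obtain ⟨p, ⟨ν, hν, hTν⟩, hpQ⟩ := hdisj
    refine ⟨ν, hν.1, hν.2, fun x => ?_⟩
    have := hpQ x
    rw [← hTν] at this
    exact this

open Classical in
private lemma vector_eq_replicate_unit {n : ℕ} (y : List.Vector Unit n) :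
    y = List.Vector.replicate n () :=
  List.Vector.eq _ _ (List.eq_replicate_iff.mpr ⟨y.toList_length, fun b _ => rfl⟩)

open Classical in
theorem stmt18 (Alp : Type) [Fintype Alp] (A : Set (List Alp)) :
    InREGRn A ↔
      ∃ (Γ : Type) (iΓ : Fintype Γ),
        letI := iΓ
        ∃ (Q : Type) (_ : Fintype Q) (M : DFA (Alp × Γ) Q) (ε : ℝ),
          0 ≤ ε ∧ ε < 1 / 2 ∧
          ∀ μ : (n : ℕ) → List.Vector Alp n → ℝ, (∀ n, IsDist (μ n)) →
            ∃ h : ℕ → List Γ, (∀ n, (h n).length = n) ∧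
              ∀ n : ℕ, 1 - ε ≤ ∑ x : List.Vector Alp n,
                if (x.toList.zip (h n) ∈ M.accepts ↔ x.toList ∈ A) then μ n x else 0  := by
  constructor
  · rintro ⟨Γ, iΓ, Q, iQ, M, ε, hε0, hε, D, hD, hprop⟩
    refine ⟨Γ, iΓ, Q, iQ, M, ε, hε0, hε, ?_⟩
    intro μ hμ
    have hex : ∀ n : ℕ, ∃ yv : List.Vector Γ n,
        1 - ε ≤ ∑ x : List.Vector Alp n,
          if (x.toList.zip yv.toList ∈ M.accepts ↔ x.toList ∈ A) then μ n x else 0 := by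
      intro n
      have hxb : ∀ x : List.Vector Alp n,
          1 - ε ≤ ∑ y : List.Vector Γ n,
            if (x.toList.zip y.toList ∈ M.accepts ↔ x.toList ∈ A) then D n y else 0 := by
        intro x
        have hx := hprop n x.toList x.toList_length
        have hr : randAccProb M.accepts (D n) x.toList = ∑ y : List.Vector Γ n,
            if x.toList.zip y.toList ∈ M.accepts then D n y else 0 := by
          unfold randAccProb
          exact Finset.sum_congr rfl fun y _ => by
            by_cases hacc : x.toList.zip y.toList ∈ M.accepts <;> simp [hacc] <;> tauto
        by_cases hxA : x.toList ∈ A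
        · have h1 := hx.1 hxA
          rw [hr] at h1
          have heq : (∑ y : List.Vector Γ n,
              if (x.toList.zip y.toList ∈ M.accepts ↔ x.toList ∈ A) then D n y else 0)
              = ∑ y : List.Vector Γ n,
                if x.toList.zip y.toList ∈ M.accepts then D n y else 0 :=
            Finset.sum_congr rfl fun y _ => by
              by_cases hacc : x.toList.zip y.toList ∈ M.accepts <;> simp [hacc, hxA]
          rw [heq]
          exact h1
        · have h1 := hx.2 hxA
          rw [hr] at h1
          have heq : (∑ y : List.Vector Γ n,
              if (x.toList.zip y.toList ∈ M.accepts ↔ x.toList ∈ A) then D n y else 0)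
              = ∑ y : List.Vector Γ n,
                if ¬ (x.toList.zip y.toList ∈ M.accepts) then D n y else 0 :=
            Finset.sum_congr rfl fun y _ => by
              by_cases hacc : x.toList.zip y.toList ∈ M.accepts <;> simp [hacc, hxA]
          have hsplit := sum_ite_split (fun y : List.Vector Γ n =>
            x.toList.zip y.toList ∈ M.accepts) (D n)
          rw [(hD n).2] at hsplit
          rw [heq]
          linarith
      by_contra hno
      push_neg at hno
      have hkey : 1 - ε ≤ ∑ y : List.Vector Γ n, D n y *
          ∑ x : List.Vector Alp n,
            if (x.toList.zip y.toList ∈ M.accepts ↔ x.toList ∈ A) then μ n x else 0 := by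
        have hswap : (∑ y : List.Vector Γ n, D n y *
            ∑ x : List.Vector Alp n,
              if (x.toList.zip y.toList ∈ M.accepts ↔ x.toList ∈ A) then μ n x else 0)
            = ∑ x : List.Vector Alp n, μ n x *
              ∑ y : List.Vector Γ n,
                if (x.toList.zip y.toList ∈ M.accepts ↔ x.toList ∈ A) then D n y else 0 := by
          simp only [Finset.mul_sum]
          rw [Finset.sum_comm]
          refine Finset.sum_congr rfl fun x _ => Finset.sum_congr rfl fun y _ => ?_
          by_cases hc : (x.toList.zip y.toList ∈ M.accepts ↔ x.toList ∈ A) <;>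
            simp [hc, mul_comm]
        rw [hswap]
        calc 1 - ε = ∑ x : List.Vector Alp n, μ n x * (1 - ε) := by
              rw [← Finset.sum_mul, (hμ n).2, one_mul]
          _ ≤ _ := Finset.sum_le_sum fun x _ =>
              mul_le_mul_of_nonneg_left (hxb x) ((hμ n).1 x)
      obtain ⟨y0, hy0⟩ : ∃ y0 : List.Vector Γ n, 0 < D n y0 := by
        by_contra hall
        push_neg at hall
        have hz : ∑ y : List.Vector Γ n, D n y = 0 :=
          Finset.sum_eq_zero fun y _ => le_antisymm (hall y) ((hD n).1 y)
        rw [(hD n).2] at hz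
        norm_num at hz
      have hlt : (∑ y : List.Vector Γ n, D n y *
          ∑ x : List.Vector Alp n,
            if (x.toList.zip y.toList ∈ M.accepts ↔ x.toList ∈ A) then μ n x else 0)
          < ∑ y : List.Vector Γ n, D n y * (1 - ε) :=
        Finset.sum_lt_sum
          (fun y _ => mul_le_mul_of_nonneg_left (le_of_lt (hno y)) ((hD n).1 y))
          ⟨y0, Finset.mem_univ y0, mul_lt_mul_of_pos_left (hno y0) hy0⟩
      rw [← Finset.sum_mul, (hD n).2, one_mul] at hlt
      linarith
    exact ⟨fun n => (hex n).choose.toList, fun n => List.Vector.toList_length _,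
      fun n => (hex n).choose_spec⟩
  · rintro ⟨Γ, iΓ, Q, iQ, M, ε, hε0, hε, P⟩
    by_cases hAlp : Nonempty Alp
    · haveI := hAlp
      haveI : Inhabited Alp := Classical.inhabited_of_nonempty hAlp
      have hpm : ∀ m : ℕ, IsDist (fun v : List.Vector Alp m =>
          if v = List.Vector.replicate m default then (1:ℝ) else 0) := by
        intro m
        constructor
        · intro v; positivity
        · simp [Finset.sum_ite_eq']
      haveI hΓ : Nonempty Γ := by
        obtain ⟨h, hlen, -⟩ := P (fun m v =>
          if v = List.Vector.replicate m default then (1:ℝ) else 0) hpm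
        rcases hh : h 1 with _ | ⟨g, l⟩
        · exfalso
          have hl1 := hlen 1
          rw [hh] at hl1
          simp at hl1
        · exact ⟨g⟩
      have hex : ∀ n : ℕ, ∃ ν : List.Vector Γ n → ℝ, IsDist ν ∧
          ∀ x : List.Vector Alp n, 1 - ε ≤ ∑ y : List.Vector Γ n,
            ν y * (if (x.toList.zip y.toList ∈ M.accepts ↔ x.toList ∈ A) then 1 else 0) := by
        intro n
        haveI : Nonempty (List.Vector Γ n) :=
          ⟨List.Vector.replicate n (Classical.arbitrary Γ)⟩
        have H : ∀ μ : List.Vector Alp n → ℝ, (∀ x, 0 ≤ μ x) → (∑ x, μ x) = 1 →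
            ∃ y : List.Vector Γ n, 1 - ε ≤ ∑ x : List.Vector Alp n,
              μ x * (if (x.toList.zip y.toList ∈ M.accepts ↔ x.toList ∈ A) then (1:ℝ) else 0) := by
          intro μ hμ1 hμ2
          set μ' : (m : ℕ) → List.Vector Alp m → ℝ := fun m =>
            if hm : m = n then (fun v => μ ⟨v.toList, by rw [v.toList_length, hm]⟩)
            else fun v => if v = List.Vector.replicate m default then (1:ℝ) else 0
            with hμ'def
          have hμn : μ' n = μ := by
            have h1 : μ' n = fun v : List.Vector Alp n =>
                μ ⟨v.toList, by rw [v.toList_length]⟩ := dif_pos rfl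
            rw [h1]
            funext v
            exact congrArg μ (List.Vector.eq _ _ rfl)
          have hμ'dist : ∀ m, IsDist (μ' m) := by
            intro m
            by_cases hm : m = n
            · subst hm
              rw [hμn]
              exact ⟨hμ1, hμ2⟩
            · have h2 : μ' m = fun v : List.Vector Alp m =>
                  if v = List.Vector.replicate m default then (1:ℝ) else 0 := dif_neg hm
              rw [h2]
              exact hpm m
          obtain ⟨h, hlen, hcorr⟩ := P μ' hμ'dist
          refine ⟨⟨h n, hlen n⟩, ?_⟩
          have hc := hcorr n
          rw [hμn] at hc
          calc 1 - ε ≤ _ := hc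
            _ = _ := Finset.sum_congr rfl fun x _ => by
                by_cases hcx : (x.toList.zip (h n) ∈ M.accepts ↔ x.toList ∈ A) <;>
                  simp [List.Vector.toList_mk, hcx]
        obtain ⟨ν, hν1, hν2, hν3⟩ := yao_minimax
          (fun (x : List.Vector Alp n) (y : List.Vector Γ n) =>
            if (x.toList.zip y.toList ∈ M.accepts ↔ x.toList ∈ A) then (1:ℝ) else 0)
          (1 - ε) H
        exact ⟨ν, ⟨hν1, hν2⟩, hν3⟩
      refine ⟨Γ, iΓ, Q, iQ, M, ε, hε0, hε, fun n => (hex n).choose,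
        fun n => ((hex n).choose_spec).1, ?_⟩
      intro n x hx
      obtain ⟨hdist, hprop⟩ := (hex n).choose_spec
      have hxv := hprop ⟨x, hx⟩
      have hxl : List.Vector.toList (⟨x, hx⟩ : List.Vector Alp n) = x := rfl
      rw [hxl] at hxv
      have hr : randAccProb M.accepts ((hex n).choose) x = ∑ y : List.Vector Γ n,
          if x.zip y.toList ∈ M.accepts then (hex n).choose y else 0 := by
        unfold randAccProb
        exact Finset.sum_congr rfl fun y _ => by
          by_cases hacc : x.zip y.toList ∈ M.accepts <;> simp [hacc] <;> tauto
      constructor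
      · intro hxA
        have heq : (∑ y : List.Vector Γ n, (hex n).choose y *
            (if (x.zip y.toList ∈ M.accepts ↔ x ∈ A) then 1 else 0))
            = ∑ y : List.Vector Γ n,
              if x.zip y.toList ∈ M.accepts then (hex n).choose y else 0 :=
          Finset.sum_congr rfl fun y _ => by
            by_cases hacc : x.zip y.toList ∈ M.accepts <;> simp [hacc, hxA]
        rw [heq] at hxv
        rw [hr]
        exact hxv
      · intro hxA
        have heq : (∑ y : List.Vector Γ n, (hex n).choose y *
            (if (x.zip y.toList ∈ M.accepts ↔ x ∈ A) then 1 else 0))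
            = ∑ y : List.Vector Γ n,
              if ¬ (x.zip y.toList ∈ M.accepts) then (hex n).choose y else 0 :=
          Finset.sum_congr rfl fun y _ => by
            by_cases hacc : x.zip y.toList ∈ M.accepts <;> simp [hacc, hxA]
        rw [heq] at hxv
        have hsplit := sum_ite_split (fun y : List.Vector Γ n =>
          x.zip y.toList ∈ M.accepts) ((hex n).choose)
        rw [hdist.2] at hsplit
        rw [hr]
        linarith
    · have hnil : ∀ x : List Alp, x = [] := by
        intro x
        cases x with
        | nil => rfl
        | cons a _ => exact absurd ⟨a⟩ hAlp
      have hcard1 : ∀ n : ℕ, Fintype.card (List.Vector Unit n) = 1 := fun n =>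
        Fintype.card_eq_one_iff.mpr
          ⟨List.Vector.replicate n (), fun y => vector_eq_replicate_unit y⟩
      have hDist : ∀ n : ℕ, IsDist (fun _ : List.Vector Unit n => (1:ℝ)) := by
        intro n
        refine ⟨fun _ => zero_le_one, ?_⟩
        rw [Finset.sum_const, Finset.card_univ, hcard1 n]
        simp
      set M0 : DFA (Alp × Unit) Bool :=
        ⟨fun q _ => q, true, if ([] : List Alp) ∈ A then {true} else ∅⟩ with hM0
      have hacc : (([] : List (Alp × Unit)) ∈ M0.accepts) ↔ (([] : List Alp) ∈ A) := by
        rw [DFA.mem_accepts]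
        show M0.evalFrom M0.start [] ∈ M0.accept ↔ _
        rw [DFA.evalFrom_nil]
        show true ∈ (if ([] : List Alp) ∈ A then ({true} : Set Bool) else ∅) ↔ _
        by_cases hA0 : ([] : List Alp) ∈ A <;> simp [hA0]
      refine ⟨Unit, inferInstance, Bool, inferInstance, M0, 0, le_refl 0, by norm_num,
        fun n _ => 1, hDist, ?_⟩
      intro n x hx
      have hx0 := hnil x
      subst hx0
      have hra : randAccProb M0.accepts (fun _ : List.Vector Unit n => (1:ℝ)) []
          = ∑ _y : List.Vector Unit n,
            if ([] : List (Alp × Unit)) ∈ M0.accepts then (1:ℝ) else 0 := by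
        unfold randAccProb
        exact Finset.sum_congr rfl fun y _ => rfl
      constructor
      · intro hA0
        have hmem : ([] : List (Alp × Unit)) ∈ M0.accepts := hacc.mpr hA0
        have hsum : (∑ _y : List.Vector Unit n,
            if ([] : List (Alp × Unit)) ∈ M0.accepts then (1:ℝ) else 0)
            = ∑ _y : List.Vector Unit n, (1:ℝ) :=
          Finset.sum_congr rfl fun y _ => if_pos hmem
        rw [hra, hsum, Finset.sum_const, Finset.card_univ, hcard1 n]
        norm_num
      · intro hA0
        have hmem : ([] : List (Alp × Unit)) ∉ M0.accepts := fun hc => hA0 (hacc.mp hc)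
        have hsum : (∑ _y : List.Vector Unit n,
            if ([] : List (Alp × Unit)) ∈ M0.accepts then (1:ℝ) else 0) = 0 :=
          Finset.sum_eq_zero fun y _ => if_neg hmem
        rw [hra, hsum]
end
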